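/- arXiv:math/0502129 — 2 statements merged into one kernel-verified Lean document; each statement's English description precedes it below -/
import Mathlib

section
/- Let T ∈ 𝒯_hom be regular and suppose ω and ρ_T are rationally independent. Then T is semi-conjugate to the irrational torus translation R_{ω,ρ_T}(θ,x) = (θ+ω, x+ρ_T): there exists a continuous surjection h : 𝕋² → 𝕋² with h ∘ T = R_{ω,ρ_T} ∘ h, π₁ ∘ h = π₁, and every fibre map h_θ : 𝕋¹ → 𝕋¹ is an order-preserving (monotone degree-one) circle map. -/
open Set Filter Topology Function

noncomputable section

def fibIter (F : ℝ → ℝ → ℝ) (ω : ℝ) (θ : ℝ) : ℕ → ℝ → ℝ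
  | 0, x => x
  | n + 1, x => F (θ + n * ω) (fibIter F ω θ n x)

namespace RISC

abbrev T1 : Type := AddCircle (1:ℝ)

lemma coe_int (m : ℤ) : ((m:ℝ) : T1) = 0 := by
  have : ((m:ℝ) : T1) = ((m • (1:ℝ) : ℝ) : T1) := by norm_num
  rw [this, AddCircle.coe_zsmul, AddCircle.coe_period, smul_zero]

lemma coe_add_int (x : ℝ) (m : ℤ) : ((x + m : ℝ) : T1) = (x : T1) := by
  rw [AddCircle.coe_add, coe_int, add_zero]

lemma coe_eq_iff {x y : ℝ} : (x : T1) = (y : T1) ↔ ∃ m : ℤ, y = x + m := by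
  constructor
  · intro h
    have h' : (y - x : ℝ) ∈ AddSubgroup.zmultiples (1:ℝ) := by
      have := (QuotientAddGroup.eq (s := AddSubgroup.zmultiples (1:ℝ)) (a := x) (b := y)).mp h
      simpa [neg_add_eq_sub] using this
    obtain ⟨m, hm⟩ := (AddSubgroup.mem_zmultiples_iff).mp h'
    exact ⟨m, by simp at hm; linarith⟩
  · rintro ⟨m, rfl⟩
    exact (coe_add_int x m).symm

lemma coe_surj : Function.Surjective ((↑) : ℝ → T1) :=
  QuotientAddGroup.mk_surjective



lemma irr_ne {ω : ℝ} (hirr : Irrational ω) {n l : ℤ} (hn : n ≠ 0) : (n:ℝ) * ω + l ≠ 0 := by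
  intro h
  apply hirr
  refine ⟨(-l : ℚ) / (n : ℚ), ?_⟩
  have hn' : (n:ℝ) ≠ 0 := Int.cast_ne_zero.mpr hn
  push_cast
  field_simp
  linarith

/-- 2D Kronecker density. -/
lemma kron {ω ρ : ℝ} (hirr : Irrational ω)
    (hind : ∀ l k q : ℤ, (l : ℝ) + (k : ℝ) * ω + (q : ℝ) * ρ = 0 →
      l = 0 ∧ k = 0 ∧ q = 0) :
    ∀ a b ε : ℝ, 0 < ε → ∃ n l k : ℤ,
      |(n:ℝ) * ω + l - a| < ε ∧ |(n:ℝ) * ρ + k - b| < ε := by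
  classical
  -- the subgroup E of ℝ² of "orbit" points
  set Ecar : Set (ℝ × ℝ) := {w | ∃ n l k : ℤ, w = ((n:ℝ) * ω + l, (n:ℝ) * ρ + k)} with hEcar
  have hzero : (0:ℝ×ℝ) ∈ Ecar := ⟨0, 0, 0, by norm_num [Prod.ext_iff]⟩
  have hadd : ∀ w₁ w₂, w₁ ∈ Ecar → w₂ ∈ Ecar → w₁ + w₂ ∈ Ecar := by
    rintro _ _ ⟨n, l, k, rfl⟩ ⟨n', l', k', rfl⟩
    exact ⟨n + n', l + l', k + k', by push_cast [Prod.ext_iff]; constructor <;> simp <;> ring⟩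
  have hneg : ∀ w, w ∈ Ecar → -w ∈ Ecar := by
    rintro _ ⟨n, l, k, rfl⟩
    exact ⟨-n, -l, -k, by push_cast [Prod.ext_iff]; constructor <;> simp <;> ring⟩
  set E : AddSubgroup (ℝ × ℝ) :=
    { carrier := Ecar
      zero_mem' := hzero
      add_mem' := fun h₁ h₂ => hadd _ _ h₁ h₂
      neg_mem' := fun h => hneg _ h } with hE
  -- small nonzero elements
  have hsmall : ∃ d : ℕ → ℝ × ℝ, (∀ j, d j ∈ Ecar) ∧ (∀ j, d j ≠ 0) ∧
      Tendsto d atTop (nhds 0) := by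
    set v : ℕ → ℝ × ℝ := fun n => (Int.fract ((n:ℝ) * ω), Int.fract ((n:ℝ) * ρ)) with hv
    have hbd : ∀ n, v n ∈ Icc (0:ℝ) 1 ×ˢ Icc (0:ℝ) 1 := by
      intro n
      constructor <;>
        exact ⟨(Int.fract_nonneg _), le_of_lt (Int.fract_lt_one _)⟩
    obtain ⟨L, _, φ, hφmono, hφlim⟩ :=
      tendsto_subseq_of_bounded ((Metric.isBounded_Icc (0:ℝ) 1).prod
        (Metric.isBounded_Icc (0:ℝ) 1)) hbd
    refine ⟨fun j => v (φ (j+1)) - v (φ j), ?_, ?_, ?_⟩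
    · intro j
      have hmem : ∀ n : ℕ, v n ∈ Ecar := by
        intro n
        refine ⟨(n:ℤ), -⌊(n:ℝ) * ω⌋, -⌊(n:ℝ) * ρ⌋, ?_⟩
        rw [hv]
        simp only [Prod.ext_iff, Int.fract]
        constructor <;> push_cast <;> ring
      have := E.sub_mem (hmem (φ (j+1))) (hmem (φ j))
      exact this
    · intro j h
      have h1 : (v (φ (j+1))).1 = (v (φ j)).1 := by
        have := congrArg Prod.fst h
        simpa [sub_eq_zero] using this
      -- first coordinates: fract ((φ(j+1))ω) = fract ((φ j)ω)
      have hne : ((φ (j+1) : ℝ)) * ω - ⌊(φ (j+1):ℝ) * ω⌋ = ((φ j : ℝ)) * ω - ⌊(φ j :ℝ) * ω⌋ := by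
        rw [hv] at h1
        simpa only [Int.fract] using h1
      have hφlt : φ j < φ (j+1) := hφmono (Nat.lt_succ_self j)
      have key : (((φ (j+1) : ℤ) - (φ j : ℤ) : ℤ) : ℝ) * ω + (((⌊(φ j :ℝ) * ω⌋ - ⌊(φ (j+1):ℝ) * ω⌋) : ℤ) : ℝ) = 0 := by
        push_cast
        linarith
      exact irr_ne hirr (by omega : ((φ (j+1) : ℤ) - (φ j : ℤ)) ≠ 0) key
    · have h1 : Tendsto (fun j => v (φ (j+1))) atTop (nhds L) :=
        hφlim.comp (tendsto_add_atTop_nat 1)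
      simpa using h1.sub hφlim
  obtain ⟨d, hdE, hdne, hdlim⟩ := hsmall
  -- unit directions
  set ej : ℕ → ℝ × ℝ := fun j => ‖d j‖⁻¹ • d j with hej
  have hejnorm : ∀ j, ‖ej j‖ = 1 := by
    intro j
    rw [hej]
    simp [norm_smul, abs_of_nonneg (norm_nonneg (d j)),
      inv_mul_cancel₀ (norm_ne_zero_iff.mpr (hdne j))]
  have hejbd : ∀ j, ej j ∈ Metric.closedBall (0:ℝ×ℝ) 1 := by
    intro j; simp [Metric.mem_closedBall, dist_zero_right, hejnorm j]
  obtain ⟨e, _, ζ, hζmono, hζlim⟩ :=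
    tendsto_subseq_of_bounded (Metric.isBounded_closedBall) hejbd
  have henorm : ‖e‖ = 1 := by
    have h1 : Tendsto (fun j => ‖ej (ζ j)‖) atTop (nhds ‖e‖) := hζlim.norm
    have h2 : Tendsto (fun _ : ℕ => (1:ℝ)) atTop (nhds ‖e‖) := by
      refine h1.congr ?_
      intro j; rw [hejnorm]
    exact (tendsto_const_nhds_iff.mp h2).symm
  -- the closure subgroup
  set G : AddSubgroup (ℝ × ℝ) := E.topologicalClosure with hG
  have hEG : ∀ w ∈ Ecar, w ∈ G := fun w hw => E.le_topologicalClosure hw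
  have hGclosed : IsClosed (G : Set (ℝ × ℝ)) := E.isClosed_topologicalClosure
  -- the line through e is in G
  have hline : ∀ t : ℝ, t • e ∈ G := by
    intro t
    have hnormd : ∀ j, (0:ℝ) < ‖d (ζ j)‖ :=
      fun j => norm_pos_iff.mpr (hdne (ζ j))
    have hdz : Tendsto (fun j => ‖d (ζ j)‖) atTop (nhds 0) := by
      have := (hdlim.comp (StrictMono.tendsto_atTop hζmono)).norm
      simpa using this
    set m : ℕ → ℤ := fun j => ⌊t / ‖d (ζ j)‖⌋ with hm
    have hmem : ∀ j, ((m j) • d (ζ j)) ∈ Ecar := fun j => E.zsmul_mem (hdE (ζ j)) (m j)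
    have hrw : ∀ j, (m j) • d (ζ j) = (((m j : ℝ)) * ‖d (ζ j)‖) • ej (ζ j) := by
      intro j
      have h1 : d (ζ j) = ‖d (ζ j)‖ • ej (ζ j) := by
        rw [hej, smul_smul, mul_inv_cancel₀ (ne_of_gt (hnormd j)), one_smul]
      calc (m j) • d (ζ j) = ((m j : ℝ)) • d (ζ j) := by
            rw [Int.cast_smul_eq_zsmul]
        _ = (((m j : ℝ)) * ‖d (ζ j)‖) • ej (ζ j) := by
            rw [← smul_smul]; rw [← h1]
    have hcoef : Tendsto (fun j => ((m j : ℝ)) * ‖d (ζ j)‖) atTop (nhds t) := by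
      have hup : ∀ j, ((m j : ℝ)) * ‖d (ζ j)‖ ≤ t := by
        intro j
        have := Int.floor_le (t / ‖d (ζ j)‖)
        calc ((m j : ℝ)) * ‖d (ζ j)‖ ≤ (t / ‖d (ζ j)‖) * ‖d (ζ j)‖ :=
              mul_le_mul_of_nonneg_right this (norm_nonneg _)
          _ = t := div_mul_cancel₀ t (ne_of_gt (hnormd j))
      have hlo : ∀ j, t - ‖d (ζ j)‖ ≤ ((m j : ℝ)) * ‖d (ζ j)‖ := by
        intro j
        have h2 : (t / ‖d (ζ j)‖) - 1 ≤ (m j : ℝ) := le_of_lt (Int.sub_one_lt_floor _)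
        have h3 := mul_le_mul_of_nonneg_right h2 (norm_nonneg (d (ζ j)))
        calc t - ‖d (ζ j)‖ = ((t / ‖d (ζ j)‖) - 1) * ‖d (ζ j)‖ := by
              rw [sub_mul, div_mul_cancel₀ t (ne_of_gt (hnormd j)), one_mul]
          _ ≤ _ := h3
      have h4 : Tendsto (fun j => t - ‖d (ζ j)‖) atTop (nhds t) := by
        simpa using (tendsto_const_nhds (x := t)).sub hdz
      exact tendsto_of_tendsto_of_tendsto_of_le_of_le h4 tendsto_const_nhds hlo hup
    have hlim : Tendsto (fun j => (m j) • d (ζ j)) atTop (nhds (t • e)) := by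
      have h10 := hcoef.smul hζlim
      refine h10.congr ?_
      intro j
      rw [hrw j]
      rfl
    exact hGclosed.mem_of_tendsto hlim (Eventually.of_forall fun j => hEG _ (hmem j))
  -- the functional killing e
  set e1 : ℝ := e.1 with he1
  set e2 : ℝ := e.2 with he2
  have hn2 : 0 < e1^2 + e2^2 := by
    rcases eq_or_ne e1 0 with h1 | h1
    · rcases eq_or_ne e2 0 with h2 | h2
      · exfalso
        have : e = 0 := by
          ext <;> simp [← he1, ← he2, h1, h2]
        rw [this] at henorm; simp at henorm
      · positivity
    · positivity
  set ph : ℝ × ℝ →+ ℝ := AddMonoidHom.mk' (fun w => e2 * w.1 - e1 * w.2) (by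
    intro w₁ w₂; simp; ring) with hph
  set P : AddSubgroup ℝ := E.map ph with hP
  have hPdense : Dense (P : Set ℝ) := by
    rcases P.dense_or_cyclic with h | ⟨c, hc⟩
    · exact h
    · exfalso
      have hmem : ∀ x ∈ P, ∃ mm : ℤ, mm • c = x := by
        intro x hx
        rw [hc] at hx
        exact AddSubgroup.mem_closure_singleton.mp hx
      have h10 : ph (1, 0) ∈ P := ⟨(1,0), ⟨0,1,0, by norm_num⟩, rfl⟩
      have h01 : ph (0, 1) ∈ P := ⟨(0,1), ⟨0,0,1, by norm_num⟩, rfl⟩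
      have hωρ : ph (ω, ρ) ∈ P := ⟨(ω,ρ), ⟨1,0,0, by norm_num⟩, rfl⟩
      obtain ⟨m0, hm0⟩ := hmem _ h10
      obtain ⟨m1, hm1⟩ := hmem _ h01
      obtain ⟨m2, hm2⟩ := hmem _ hωρ
      simp only [hph, AddMonoidHom.mk'_apply, zsmul_eq_mul] at hm0 hm1 hm2
      have hm0' : (m0:ℝ) * c = e2 := by rw [hm0]; ring
      have hm1' : (m1:ℝ) * c = -e1 := by rw [hm1]; ring
      have hm2' : (m2:ℝ) * c = e2 * ω - e1 * ρ := by linarith [hm2]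
      have hcne : c ≠ 0 := by
        intro h
        rw [h, mul_zero] at hm0' hm1'
        have he2z : e2 = 0 := hm0'.symm
        have he1z : e1 = 0 := by linarith [hm1'.symm]
        rw [he1z, he2z] at hn2
        norm_num at hn2
      have hrel : ((-m2 : ℤ) : ℝ) + ((m0:ℤ):ℝ) * ω + ((m1:ℤ):ℝ) * ρ = 0 := by
        have h5 : c * ((m0:ℝ) * ω + (m1:ℝ) * ρ - (m2:ℝ)) = 0 := by
          have : (m0:ℝ) * c * ω + (m1:ℝ) * c * ρ - (m2:ℝ) * c = 0 := by
            rw [hm0', hm1', hm2']; ring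
          calc c * ((m0:ℝ) * ω + (m1:ℝ) * ρ - (m2:ℝ))
              = (m0:ℝ) * c * ω + (m1:ℝ) * c * ρ - (m2:ℝ) * c := by ring
            _ = 0 := this
        have h6 := (mul_eq_zero.mp h5).resolve_left hcne
        push_cast
        linarith
      obtain ⟨hz1, hz2, hz3⟩ := hind _ _ _ hrel
      have he2z : e2 = 0 := by rw [← hm0', hz2]; simp
      have he1z : e1 = 0 := by
        have h11 := hm1'
        rw [hz3] at h11
        simp at h11
        linarith
      rw [he1z, he2z] at hn2
      norm_num at hn2
  -- G = everything
  have hGtop : ∀ z : ℝ × ℝ, z ∈ G := by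
    intro z
    have : z ∈ closure (G : Set (ℝ × ℝ)) := by
      rw [Metric.mem_closure_iff]
      intro ε hε
      set ε' : ℝ := ε * (e1^2 + e2^2) / 2 with hε'
      have hε'pos : 0 < ε' := by positivity
      obtain ⟨pz, hpz, hdist⟩ := Metric.mem_closure_iff.mp (hPdense (ph z)) ε' hε'pos
      obtain ⟨s, hsE, rfl⟩ := hpz
      set w : ℝ × ℝ := z - s with hw
      set α : ℝ := w.1 * e1 + w.2 * e2 with hα
      set n2 : ℝ := e1^2 + e2^2 with hn2'
      have hpw : |ph w| < ε' := by
        have : ph w = ph z - ph s := by simp [hw]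
        rw [this, ← Real.dist_eq]
        exact hdist
      set y : ℝ × ℝ := s + (α / n2) • e with hy
      have hyG : y ∈ G := G.add_mem (hEG s hsE) (hline (α / n2))
      refine ⟨y, hyG, ?_⟩
      have hzy : z - y = (ph w / n2) • (e2, -e1) := by
        have hphw : ph w = e2 * w.1 - e1 * w.2 := by simp [hph]
        have h1 : z - y = w - (α / n2) • e := by
          rw [hy, hw]; abel
        rw [h1]
        ext
        · simp only [Prod.fst_sub, Prod.smul_fst, smul_eq_mul]
          rw [hphw, hα, hn2', ← he1]
          have hD : e1^2+e2^2 ≠ 0 := by rw [← hn2']; exact hn2.ne'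
          field_simp
          ring
        · simp only [Prod.snd_sub, Prod.smul_snd, smul_eq_mul]
          rw [hphw, hα, hn2', ← he2]
          have hD : e1^2+e2^2 ≠ 0 := by rw [← hn2']; exact hn2.ne'
          field_simp
          ring
      have : dist z y = ‖(ph w / n2) • ((e2, -e1) : ℝ × ℝ)‖ := by
        rw [dist_eq_norm, hzy]
      rw [this]
      have hne : ‖((e2, -e1) : ℝ × ℝ)‖ ≤ 1 := by
        have h1 : |e1| ≤ 1 := by
          have := norm_fst_le e
          rw [henorm] at this
          simpa [he1] using this
        have h2 : |e2| ≤ 1 := by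
          have := norm_snd_le e
          rw [henorm] at this
          simpa [he2] using this
        rw [Prod.norm_def]
        simp only [Real.norm_eq_abs, abs_neg]
        exact max_le h2 h1
      have hstep : ‖(ph w / n2) • ((e2, -e1) : ℝ × ℝ)‖ ≤ |ph w| / n2 := by
        rw [norm_smul]
        have h12 : ‖ph w / n2‖ = |ph w| / n2 := by
          rw [Real.norm_eq_abs, abs_div, abs_of_pos hn2]
        rw [h12]
        exact mul_le_of_le_one_right (div_nonneg (abs_nonneg _) hn2.le) hne
      have hfin : |ph w| / n2 < ε := by
        rw [div_lt_iff₀ hn2]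
        nlinarith
      linarith
    rwa [hGclosed.closure_eq] at this
  -- extract the approximation
  intro a b ε hε
  have hab := hGtop (a, b)
  rw [hG] at hab
  have : (a, b) ∈ closure (E : Set (ℝ × ℝ)) := hab
  obtain ⟨y, hyE, hdist⟩ := Metric.mem_closure_iff.mp this ε hε
  obtain ⟨n, l, k, rfl⟩ := hyE
  refine ⟨n, l, k, ?_, ?_⟩
  · have h1 : dist a ((n:ℝ) * ω + l) < ε :=
      lt_of_le_of_lt (le_max_left _ _) (by rwa [Prod.dist_eq] at hdist)
    rw [Real.dist_eq] at h1
    rwa [abs_sub_comm]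
  · have h1 : dist b ((n:ℝ) * ρ + k) < ε :=
      lt_of_le_of_lt (le_max_right _ _) (by rwa [Prod.dist_eq] at hdist)
    rw [Real.dist_eq] at h1
    rwa [abs_sub_comm]



/-- Minimal set together with a continuous transfer function for a cocycle with
uniformly bounded Birkhoff sums. -/
theorem exists_minimal_transfer {X : Type} [TopologicalSpace X] [CompactSpace X] [T2Space X]
    [Nonempty X]
    (T : X → X) (hTc : Continuous T) (hTb : Function.Bijective T)
    (g : X → ℝ) (hg : Continuous g) (C : ℝ)
    (hbd : ∀ (p : X) (n : ℕ), |∑ k ∈ Finset.range n, g (T^[k] p)| ≤ C) :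
    ∃ (M : Set X) (u : X → ℝ), M.Nonempty ∧ IsCompact M ∧ T '' M = M ∧
      ContinuousOn u M ∧ (∀ p ∈ M, |u p| ≤ C) ∧ (∀ p ∈ M, u (T p) = u p - g p) ∧
      (∀ p q : X, p ∈ M → q ∈ M → ∀ N : ℕ,
        p ∈ closure {y | ∃ n, N ≤ n ∧ y = T^[n] q}) := by
  classical
  obtain ⟨TH, hTH⟩ : ∃ TH : X ≃ₜ X, ∀ x, TH x = T x := by
    refine ⟨Continuous.homeoOfEquivCompactToT2 (f := Equiv.ofBijective T hTb) hTc, fun x => rfl⟩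
  have hTHsymm : ∀ x, TH.symm (T x) = x := by
    intro x
    rw [← hTH x]; exact TH.symm_apply_apply x
  have hTHsymm' : ∀ x, T (TH.symm x) = x := by
    intro x
    rw [← hTH _]; exact TH.apply_symm_apply x
  set S : X × ℝ → X × ℝ := fun y => (T y.1, y.2 - g y.1) with hS
  set Sinv : X × ℝ → X × ℝ := fun y => (TH.symm y.1, y.2 + g (TH.symm y.1)) with hSinv
  have hleft : Function.LeftInverse Sinv S := by
    intro y
    simp only [hS, hSinv, hTHsymm]
    exact Prod.ext rfl (by ring)
  have hright : Function.RightInverse Sinv S := by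
    intro y
    simp only [hS, hSinv, hTHsymm']
    exact Prod.ext rfl (by ring)
  set SE : X × ℝ ≃ X × ℝ := ⟨S, Sinv, hleft, hright⟩ with hSE
  have hScont : Continuous S :=
    (hTc.comp continuous_fst).prodMk (continuous_snd.sub (hg.comp continuous_fst))
  have hSinvcont : Continuous Sinv :=
    (TH.continuous_symm.comp continuous_fst).prodMk
      (continuous_snd.add (hg.comp (TH.continuous_symm.comp continuous_fst)))
  set SH : X × ℝ ≃ₜ X × ℝ := ⟨SE, hScont, hSinvcont⟩ with hSH
  have hSbij : Function.Bijective S := SE.bijective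
  have hSHim : ∀ A : Set (X × ℝ), SH '' A = S '' A := fun A => rfl
  set p₀ : X := Classical.arbitrary X with hp₀
  set y₀ : X × ℝ := (p₀, 0) with hy₀
  set birk : ℕ → X → ℝ := fun n p => ∑ k ∈ Finset.range n, g (T^[k] p) with hbirk
  have hSn : ∀ (n : ℕ) (p : X) (t : ℝ), S^[n] (p, t) = (T^[n] p, t - birk n p) := by
    intro n
    induction n with
    | zero => intro p t; simp [hbirk]
    | succ n ih =>
      intro p t
      rw [Function.iterate_succ_apply', ih p t]
      simp only [hS, hbirk, Finset.sum_range_succ]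
      rw [Function.iterate_succ_apply']
      exact Prod.ext rfl (by ring)
  set tl : ℕ → Set (X × ℝ) := fun N => closure {y | ∃ n, N ≤ n ∧ y = S^[n] y₀} with htl
  set box : Set (X × ℝ) := univ ×ˢ Icc (-C) C with hbox
  have hboxcomp : IsCompact box := isCompact_univ.prod isCompact_Icc
  have hboxclosed : IsClosed box := hboxcomp.isClosed
  have horbbox : ∀ n : ℕ, S^[n] y₀ ∈ box := by
    intro n
    rw [hy₀, hSn]
    refine ⟨trivial, ?_⟩
    have := hbd p₀ n
    rw [abs_le] at this
    constructor <;> simp <;> [linarith [this.2]; linarith [this.1]]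
  have htlsub : ∀ N, tl N ⊆ box := by
    intro N
    apply closure_minimal _ hboxclosed
    rintro y ⟨n, _, rfl⟩
    exact horbbox n
  have htlcomp : ∀ N, IsCompact (tl N) := fun N =>
    hboxcomp.of_isClosed_subset isClosed_closure (htlsub N)
  have htlne : ∀ N, (tl N).Nonempty := fun N => ⟨S^[N] y₀, subset_closure ⟨N, le_rfl, rfl⟩⟩
  have htlanti : ∀ N M : ℕ, N ≤ M → tl M ⊆ tl N := by
    intro N M h
    apply closure_mono
    rintro y ⟨n, hn, rfl⟩
    exact ⟨n, le_trans h hn, rfl⟩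
  set Ω : Set (X × ℝ) := ⋂ N, tl N with hΩ
  have hΩne : Ω.Nonempty := by
    apply IsCompact.nonempty_iInter_of_directed_nonempty_isCompact_isClosed tl
      ?_ htlne htlcomp (fun N => isClosed_closure)
    intro a b
    exact ⟨max a b, htlanti _ _ (le_max_left a b), htlanti _ _ (le_max_right a b)⟩
  have hΩcomp : IsCompact Ω :=
    hboxcomp.of_isClosed_subset (isClosed_iInter fun N => isClosed_closure)
      ((iInter_subset tl 0).trans (htlsub 0))
  have hSim_tl : ∀ N, S '' tl N = tl (N + 1) := by
    intro N
    have hsets : S '' {y | ∃ n, N ≤ n ∧ y = S^[n] y₀} = {y | ∃ n, N + 1 ≤ n ∧ y = S^[n] y₀} := by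
      ext y
      constructor
      · rintro ⟨z, ⟨n, hn, rfl⟩, rfl⟩
        exact ⟨n + 1, by omega, (Function.iterate_succ_apply' S n y₀).symm⟩
      · rintro ⟨n, hn, rfl⟩
        refine ⟨S^[n-1] y₀, ⟨n - 1, by omega, rfl⟩, ?_⟩
        rw [← Function.iterate_succ_apply' S (n-1) y₀]
        congr 1
        omega
    rw [htl, ← hSHim, SH.image_closure, hSHim, hsets]
  have hΩS : S '' Ω = Ω := by
    rw [hΩ, Set.image_iInter hSbij tl]
    apply le_antisymm
    · intro y hy
      simp only [mem_iInter] at hy ⊢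
      intro N
      have := hy N
      rw [hSim_tl N] at this
      exact htlanti N (N+1) (by omega) this
    · intro y hy
      simp only [mem_iInter] at hy ⊢
      intro N
      rw [hSim_tl N]
      exact hy (N + 1)
  set 𝒞 : Set (Set (X × ℝ)) := {A | A ⊆ Ω ∧ A.Nonempty ∧ IsCompact A ∧ S '' A = A} with h𝒞
  have hΩ𝒞 : Ω ∈ 𝒞 := ⟨le_rfl, hΩne, hΩcomp, hΩS⟩
  have hchainlb : ∀ c ⊆ 𝒞, IsChain (· ⊆ ·) c → c.Nonempty →
      ∃ lb ∈ 𝒞, ∀ A ∈ c, lb ⊆ A := by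
    intro c hc𝒞 hchain hcne
    haveI : Nonempty c := hcne.to_subtype
    refine ⟨⋂ A : c, (A : Set (X × ℝ)), ?_, fun A hA => iInter_subset_of_subset ⟨A, hA⟩ le_rfl⟩
    have hdir : Directed (· ⊇ ·) (fun A : c => (A : Set (X × ℝ))) := by
      intro A B
      rcases hchain.total A.2 B.2 with h | h
      · exact ⟨A, le_rfl, h⟩
      · exact ⟨B, h, le_rfl⟩
    have hne : (⋂ A : c, (A : Set (X × ℝ))).Nonempty :=
      IsCompact.nonempty_iInter_of_directed_nonempty_isCompact_isClosed _ hdir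
        (fun A => (hc𝒞 A.2).2.1) (fun A => (hc𝒞 A.2).2.2.1)
        (fun A => (hc𝒞 A.2).2.2.1.isClosed)
    refine ⟨?_, hne, ?_, ?_⟩
    · obtain ⟨A⟩ := ‹Nonempty c›
      exact (iInter_subset _ A).trans (hc𝒞 A.2).1
    · exact IsCompact.of_isClosed_subset (hc𝒞 (Classical.arbitrary c).2).2.2.1
        (isClosed_iInter fun A => (hc𝒞 A.2).2.2.1.isClosed)
        (iInter_subset _ _)
    · rw [Set.image_iInter hSbij]
      exact iInter_congr fun A => (hc𝒞 A.2).2.2.2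
  obtain ⟨K, -, hKmin⟩ := zorn_superset_nonempty 𝒞 hchainlb Ω hΩ𝒞
  have hK𝒞 : K ∈ 𝒞 := hKmin.prop
  obtain ⟨hKΩ, hKne, hKcomp, hKS⟩ := hK𝒞
  have hKuse : ∀ A ∈ 𝒞, A ⊆ K → A = K := fun A hA hsub =>
    le_antisymm hsub (hKmin.2 hA hsub)
  have hKbox : K ⊆ box := hKΩ.trans ((iInter_subset tl 0).trans (htlsub 0))
  -- K is a graph
  have hgraph_aux : ∀ (p : X) (t s : ℝ), (p, t) ∈ K → (p, s) ∈ K → t < s → False := by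
    intro p t s hKt hKs hts
    set δ : ℝ := s - t with hδ
    have hδpos : 0 < δ := by rw [hδ]; linarith
    set sh : X × ℝ ≃ₜ X × ℝ := (Homeomorph.refl X).prodCongr (Homeomorph.addRight δ) with hsh
    have hshapp : ∀ y : X × ℝ, sh y = (y.1, y.2 + δ) := fun y => rfl
    set Kδ : Set (X × ℝ) := sh '' K with hKδ
    have hKδcomp : IsCompact Kδ := hKcomp.image sh.continuous
    have hcomm : ∀ y : X × ℝ, S (sh y) = sh (S y) := by
      intro y
      simp only [hshapp, hS]
      exact Prod.ext rfl (by ring)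
    have hSKδ : S '' Kδ = Kδ := by
      rw [hKδ, ← Set.image_comp]
      have : S ∘ sh = sh ∘ S := funext hcomm
      rw [this, Set.image_comp, hKS]
    set A : Set (X × ℝ) := K ∩ Kδ with hA
    have hA𝒞 : A ∈ 𝒞 := by
      refine ⟨(inter_subset_left).trans hKΩ, ⟨(p, s), hKs, ?_⟩, hKcomp.inter_right hKδcomp.isClosed, ?_⟩
      · exact ⟨(p, t), hKt, by rw [hshapp]; exact Prod.ext rfl (by ring)⟩
      · rw [hA, Set.image_inter hSbij.1, hKS, hSKδ]
    have hAK : A = K := hKuse A hA𝒞 inter_subset_left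
    have hdown : ∀ y ∈ K, (y.1, y.2 - δ) ∈ K := by
      intro y hy
      have : y ∈ Kδ := by rw [← hAK] at hy; exact hy.2
      obtain ⟨z, hz, hzy⟩ := this
      rw [hshapp] at hzy
      have h1 : z.1 = y.1 := (Prod.ext_iff.mp hzy).1
      have h2 : z.2 + δ = y.2 := (Prod.ext_iff.mp hzy).2
      have hze : z = (y.1, y.2 - δ) := by
        have hz2 : z.2 = y.2 - δ := by linarith
        rw [← h1, ← hz2, Prod.mk.eta]
      rwa [hze] at hz
    have hiter : ∀ j : ℕ, (p, t - j * δ) ∈ K := by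
      intro j
      induction j with
      | zero => simpa using hKt
      | succ j ih =>
        have := hdown _ ih
        simp only at this
        have harr : t - (j:ℝ) * δ - δ = t - ((j:ℕ) + 1 : ℝ) * δ := by ring
        rw [harr] at this
        convert this using 3
        push_cast
        ring
    obtain ⟨j, hj⟩ := exists_nat_gt ((t + C) / δ)
    have hmem := hKbox (hiter j)
    have hlb : -C ≤ t - j * δ := (hmem.2).1
    have : (t + C) / δ * δ < j * δ := by
      exact mul_lt_mul_of_pos_right hj hδpos
    rw [div_mul_cancel₀ _ (ne_of_gt hδpos)] at this
    linarith
  have hgraph : ∀ (p : X) (t s : ℝ), (p, t) ∈ K → (p, s) ∈ K → t = s := by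
    intro p t s ht hs
    rcases lt_trichotomy t s with h | h | h
    · exact absurd h (fun h => hgraph_aux p t s ht hs h)
    · exact h
    · exact absurd h (fun h => hgraph_aux p s t hs ht h)
  -- the minimal set and transfer function
  set M : Set X := Prod.fst '' K with hM
  set u : X → ℝ := fun p => sSup {τ | (p, τ) ∈ K} with hu
  have hMK : ∀ p ∈ M, (p, u p) ∈ K := by
    rintro p ⟨y, hy, rfl⟩
    have hset : {τ | (y.1, τ) ∈ K} = {y.2} := by
      ext τ
      simp only [mem_setOf_eq, mem_singleton_iff]
      constructor
      · intro h
        exact hgraph y.1 τ y.2 h (by rwa [Prod.mk.eta])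
      · rintro rfl
        rwa [Prod.mk.eta]
    rw [hu]
    simp only [hset, csSup_singleton]
    rwa [Prod.mk.eta]
  have hMuniq : ∀ p ∈ M, ∀ τ, (p, τ) ∈ K → τ = u p := by
    intro p hp τ hτ
    exact hgraph p τ (u p) hτ (hMK p hp)
  have hMne : M.Nonempty := hKne.image _
  have hMcomp : IsCompact M := hKcomp.image continuous_fst
  have hTM : T '' M = M := by
    rw [hM, ← Set.image_comp]
    have hcmp : T ∘ Prod.fst = Prod.fst ∘ S := rfl
    rw [hcmp, Set.image_comp, hKS]
  have hMmin : ∀ A : Set X, A ⊆ M → A.Nonempty → IsCompact A → T '' A = A → A = M := by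
    intro A hAM hAne hAcomp hTA
    set KA : Set (X × ℝ) := K ∩ (Prod.fst ⁻¹' A) with hKA
    have hKA𝒞 : KA ∈ 𝒞 := by
      refine ⟨(inter_subset_left).trans hKΩ, ?_, ?_, ?_⟩
      · obtain ⟨a, ha⟩ := hAne
        exact ⟨(a, u a), ⟨hMK a (hAM ha), ha⟩⟩
      · exact hKcomp.inter_right (hAcomp.isClosed.preimage continuous_fst)
      · rw [hKA]
        apply le_antisymm
        · rintro y ⟨z, ⟨hzK, hzA⟩, rfl⟩
          constructor
          · rw [← hKS]; exact mem_image_of_mem S hzK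
          · show T z.1 ∈ A
            rw [← hTA]
            exact mem_image_of_mem T hzA
        · rintro y ⟨hyK, hyA⟩
          have : y ∈ S '' K := by rw [hKS]; exact hyK
          obtain ⟨z, hzK, rfl⟩ := this
          refine ⟨z, ⟨hzK, ?_⟩, rfl⟩
          show z.1 ∈ A
          have : T z.1 ∈ A := hyA
          rw [← hTA] at this
          obtain ⟨a, haA, ha⟩ := this
          rwa [← hTb.1 ha]
    have : KA = K := hKuse KA hKA𝒞 inter_subset_left
    apply le_antisymm hAM
    rw [hM, ← this, hKA]
    rintro p ⟨y, ⟨-, hyA⟩, rfl⟩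
    exact hyA
  have hubd : ∀ p ∈ M, |u p| ≤ C := by
    intro p hp
    have := hKbox (hMK p hp)
    rw [abs_le]
    exact ⟨(this.2).1, (this.2).2⟩
  have htrans : ∀ p ∈ M, u (T p) = u p - g p := by
    intro p hp
    have h1 : S (p, u p) ∈ K := by
      rw [← hKS]; exact mem_image_of_mem S (hMK p hp)
    have h2 : T p ∈ M := by
      rw [← hTM]; exact mem_image_of_mem T hp
    exact (hMuniq (T p) h2 (u p - g p) h1).symm
  -- continuity of u on M
  have hucont : ContinuousOn u M := by
    rw [continuousOn_iff_continuous_restrict]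
    haveI : CompactSpace K := isCompact_iff_compactSpace.mp hKcomp
    set f : K → M := fun y => ⟨(y : X × ℝ).1, mem_image_of_mem _ y.2⟩ with hf
    have hfc : Continuous f := Continuous.subtype_mk (continuous_fst.comp continuous_subtype_val) _
    have hfbij : Function.Bijective f := by
      constructor
      · rintro ⟨y, hy⟩ ⟨z, hz⟩ hyz
        have h1 : y.1 = z.1 := congrArg Subtype.val hyz
        have h2 : y.2 = z.2 := by
          apply hgraph y.1 y.2 z.2
          · rwa [Prod.mk.eta]
          · rw [h1]; rwa [Prod.mk.eta]
        exact Subtype.ext (Prod.ext h1 h2)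
      · rintro ⟨p, hp⟩
        exact ⟨⟨(p, u p), hMK p hp⟩, rfl⟩
    set fH : K ≃ₜ M := Continuous.homeoOfEquivCompactToT2 (f := Equiv.ofBijective f hfbij) hfc
      with hfH
    have key : M.domRestrict u = (fun y : K => (y : X × ℝ).2) ∘ fH.symm := by
      funext p
      set y : K := fH.symm p with hy
      have h1 : f y = p := by
        have : fH y = f y := rfl
        rw [hy, ← this, Homeomorph.apply_symm_apply]
      have h2 : (y : X × ℝ).1 = (p : X) := congrArg Subtype.val h1
      have h3 : ((p : X), (y : X × ℝ).2) ∈ K := by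
        rw [← h2, Prod.mk.eta]
        exact y.2
      have h4 : (y : X × ℝ).2 = u p := hMuniq p p.2 _ h3
      simp only [domRestrict_apply, Function.comp_apply, ← hy, h4]
    rw [key]
    exact (continuous_snd.comp continuous_subtype_val).comp fH.symm.continuous
  -- recurrence
  refine ⟨M, u, hMne, hMcomp, hTM, hucont, hubd, htrans, ?_⟩
  intro p q hp hq N
  set orb : ℕ → Set X := fun N' => {y | ∃ n, N' ≤ n ∧ y = T^[n] q} with horb
  have horbM : ∀ n : ℕ, T^[n] q ∈ M := by
    intro n
    induction n with
    | zero => simpa using hq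
    | succ n ih =>
      rw [Function.iterate_succ_apply']
      rw [← hTM]
      exact mem_image_of_mem T ih
  have hcl_sub : ∀ N', closure (orb N') ⊆ M := by
    intro N'
    apply closure_minimal _ hMcomp.isClosed
    rintro y ⟨n, -, rfl⟩
    exact horbM n
  set Mq : Set X := ⋂ N', closure (orb N') with hMq
  have hanti : ∀ a b : ℕ, a ≤ b → closure (orb b) ⊆ closure (orb a) := by
    intro a b h
    apply closure_mono
    rintro y ⟨n, hn, rfl⟩
    exact ⟨n, le_trans h hn, rfl⟩
  have hMqne : Mq.Nonempty := by
    apply IsCompact.nonempty_iInter_of_directed_nonempty_isCompact_isClosed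
      (fun N' => closure (orb N'))
      ?_ (fun N' => ⟨T^[N'] q, subset_closure ⟨N', le_rfl, rfl⟩⟩)
      (fun N' => hMcomp.of_isClosed_subset isClosed_closure (hcl_sub N'))
      (fun N' => isClosed_closure)
    intro a b
    exact ⟨max a b, hanti _ _ (le_max_left a b), hanti _ _ (le_max_right a b)⟩
  have hTorb : ∀ N', T '' orb N' = orb (N' + 1) := by
    intro N'
    ext y
    constructor
    · rintro ⟨z, ⟨n, hn, rfl⟩, rfl⟩
      exact ⟨n + 1, by omega, (Function.iterate_succ_apply' T n q).symm⟩
    · rintro ⟨n, hn, rfl⟩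
      refine ⟨T^[n-1] q, ⟨n - 1, by omega, rfl⟩, ?_⟩
      rw [← Function.iterate_succ_apply' T (n-1) q]
      congr 1
      omega
  have hTHclos : ∀ A : Set X, T '' closure A = closure (T '' A) := by
    intro A
    have h1 : T '' closure A = TH '' closure A := by
      apply congrFun (congrArg _ _) _
      funext x
      rw [hTH]
    have h2 : T '' A = TH '' A := by
      apply congrFun (congrArg _ _) _
      funext x
      rw [hTH]
    rw [h1, TH.image_closure, ← h2]
  have hTMq : T '' Mq = Mq := by
    rw [hMq, Set.image_iInter hTb]
    apply le_antisymm
    · intro y hy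
      simp only [mem_iInter] at hy ⊢
      intro N'
      have := hy N'
      rw [hTHclos, hTorb] at this
      exact hanti N' (N'+1) (by omega) this
    · intro y hy
      simp only [mem_iInter] at hy ⊢
      intro N'
      rw [hTHclos, hTorb]
      exact hy (N' + 1)
  have : Mq = M := hMmin Mq (le_trans (iInter_subset _ 0) (hcl_sub 0)) hMqne
    (hMcomp.of_isClosed_subset (isClosed_iInter fun N' => isClosed_closure)
      (le_trans (iInter_subset _ 0) (hcl_sub 0))) hTMq
  have hpMq : p ∈ Mq := by rw [this]; exact hp
  exact mem_iInter.mp hpMq N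




section FFacts
variable {F : ℝ → ℝ → ℝ} {ω : ℝ}

lemma F_add_int (hFx : ∀ θ x : ℝ, F θ (x + 1) = F θ x + 1) (θ x : ℝ) (m : ℤ) :
    F θ (x + m) = F θ x + m := by
  induction m using Int.induction_on with
  | zero => simp
  | succ n ih =>
    have h2 : (x + (n + 1 : ℤ) : ℝ) = (x + ((n : ℤ) : ℝ)) + 1 := by push_cast; ring
    rw [h2, hFx, ih]
    push_cast; ring
  | pred n ih =>
    have h1 : (x + (-n - 1 : ℤ) : ℝ) + 1 = x + (-n : ℤ) := by push_cast; ring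
    have := hFx θ (x + (-n - 1 : ℤ))
    rw [h1, ih] at this
    push_cast at this ⊢
    linarith

lemma F_per_int (hFθ : ∀ θ x : ℝ, F (θ + 1) x = F θ x) (θ x : ℝ) (m : ℤ) :
    F (θ + m) x = F θ x := by
  induction m using Int.induction_on with
  | zero => simp
  | succ n ih =>
    have h2 : (θ + (n + 1 : ℤ) : ℝ) = (θ + ((n : ℤ) : ℝ)) + 1 := by push_cast; ring
    rw [h2, hFθ, ih]
  | pred n ih =>
    have h1 : (θ + (-n - 1 : ℤ) : ℝ) + 1 = θ + (-n : ℤ) := by push_cast; ring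
    have := hFθ (θ + (-n - 1 : ℤ)) x
    rw [h1, ih] at this
    exact this.symm

lemma fib_mono (hFm : ∀ θ : ℝ, StrictMono (F θ)) (θ : ℝ) (n : ℕ) :
    StrictMono (fibIter F ω θ n) := by
  induction n with
  | zero => exact fun a b h => h
  | succ n ih => exact fun a b h => (hFm _) (ih h)

lemma fib_add_int (hFx : ∀ θ x : ℝ, F θ (x + 1) = F θ x + 1) (θ : ℝ) (n : ℕ) (x : ℝ) (m : ℤ) :
    fibIter F ω θ n (x + m) = fibIter F ω θ n x + m := by
  induction n with
  | zero => rfl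
  | succ n ih =>
    show F (θ + n * ω) (fibIter F ω θ n (x + m)) = F (θ + n * ω) (fibIter F ω θ n x) + m
    rw [ih, F_add_int hFx]

end FFacts

theorem main
    (F : ℝ → ℝ → ℝ) (ω : ℝ) (hirr : Irrational ω)
    (hFc : Continuous fun p : ℝ × ℝ => F p.1 p.2)
    (hFm : ∀ θ : ℝ, StrictMono (F θ))
    (hFs : ∀ θ : ℝ, Function.Surjective (F θ))
    (hFx : ∀ θ x : ℝ, F θ (x + 1) = F θ x + 1)
    (hFθ : ∀ θ x : ℝ, F (θ + 1) x = F θ x)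
    (T : AddCircle (1:ℝ) × AddCircle (1:ℝ) → AddCircle (1:ℝ) × AddCircle (1:ℝ))
    (hproj : ∀ θ x : ℝ,
      T ((θ : AddCircle (1:ℝ)), (x : AddCircle (1:ℝ))) =
        (((θ + ω : ℝ) : AddCircle (1:ℝ)), ((F θ x : ℝ) : AddCircle (1:ℝ))))
    (ρ : ℝ)
    (hρ : ∀ θ x : ℝ, Tendsto (fun n : ℕ => (fibIter F ω θ n x - x) / n) atTop (nhds ρ))
    (hreg : ∃ C : ℝ, ∀ (θ x : ℝ) (n : ℕ), |fibIter F ω θ n x - x - n * ρ| ≤ C)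
    (hind : ∀ l k q : ℤ, (l : ℝ) + (k : ℝ) * ω + (q : ℝ) * ρ = 0 →
      l = 0 ∧ k = 0 ∧ q = 0) :
    ∃ h : AddCircle (1:ℝ) × AddCircle (1:ℝ) → AddCircle (1:ℝ) × AddCircle (1:ℝ),
      Continuous h ∧ Function.Surjective h ∧
      (∀ p, h (T p) = ((h p).1 + ((ω : ℝ) : AddCircle (1:ℝ)),
        (h p).2 + ((ρ : ℝ) : AddCircle (1:ℝ)))) ∧
      (∀ p, (h p).1 = p.1) ∧
      ∃ H : ℝ → ℝ → ℝ,
        (∀ θ : ℝ, Monotone (H θ)) ∧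
        (∀ θ x : ℝ, H θ (x + 1) = H θ x + 1) ∧
        (∀ θ x : ℝ, h ((θ : AddCircle (1:ℝ)), (x : AddCircle (1:ℝ))) =
          ((θ : AddCircle (1:ℝ)), ((H θ x : ℝ) : AddCircle (1:ℝ)))) := by
  classical
  obtain ⟨C, hC⟩ := hreg
  set pi2 : ℝ × ℝ → T1 × T1 := fun q => ((q.1 : T1), (q.2 : T1)) with hpi2
  have pi2_surj : Function.Surjective pi2 := by
    rintro ⟨a, b⟩
    obtain ⟨θ, rfl⟩ := coe_surj a
    obtain ⟨x, rfl⟩ := coe_surj b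
    exact ⟨(θ, x), rfl⟩
  have pi2_oq : IsOpenQuotientMap pi2 := by
    have h := (QuotientAddGroup.isOpenQuotientMap_mk
        (N := AddSubgroup.zmultiples (1:ℝ))).prodMap
      (QuotientAddGroup.isOpenQuotientMap_mk (N := AddSubgroup.zmultiples (1:ℝ)))
    exact h
  have pi2_cont : Continuous pi2 := pi2_oq.continuous
  -- continuity and bijectivity of T
  have hTpi2 : ∀ q : ℝ × ℝ, T (pi2 q) = pi2 (q.1 + ω, F q.1 q.2) := by
    rintro ⟨θ, x⟩
    exact hproj θ x
  have hTcont : Continuous T := by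
    rw [← pi2_oq.continuous_comp_iff]
    have : T ∘ pi2 = fun q : ℝ × ℝ => pi2 (q.1 + ω, F q.1 q.2) := funext hTpi2
    rw [this]
    apply pi2_cont.comp
    exact (continuous_fst.add continuous_const).prodMk hFc
  have hTinj : Function.Injective T := by
    intro p p' h
    obtain ⟨⟨θ, x⟩, rfl⟩ := pi2_surj p
    obtain ⟨⟨θ', x'⟩, rfl⟩ := pi2_surj p'
    rw [hTpi2, hTpi2] at h
    have h1 : ((θ + ω : ℝ) : T1) = ((θ' + ω : ℝ) : T1) := congrArg Prod.fst h
    have h2 : ((F θ x : ℝ) : T1) = ((F θ' x' : ℝ) : T1) := congrArg Prod.snd h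
    obtain ⟨l, hl⟩ := coe_eq_iff.mp h1
    have hθ' : θ' = θ + l := by linarith
    have hFθ' : F θ' x' = F θ x' := by rw [hθ']; exact F_per_int hFθ θ x' l
    rw [hFθ'] at h2
    obtain ⟨m, hm⟩ := coe_eq_iff.mp h2
    have hx' : F θ x' = F θ (x + m) := by rw [F_add_int hFx]; linarith
    have hxx : x' = x + m := (hFm θ).injective hx'
    show pi2 (θ, x) = pi2 (θ', x')
    rw [hpi2]
    simp only [Prod.mk.injEq]
    constructor
    · rw [hθ', coe_add_int]
    · rw [hxx, coe_add_int]
  have hTsurj : Function.Surjective T := by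
    intro p
    obtain ⟨⟨a, b⟩, rfl⟩ := pi2_surj p
    obtain ⟨x, hx⟩ := hFs (a - ω) b
    refine ⟨pi2 (a - ω, x), ?_⟩
    rw [hTpi2]
    show pi2 (a - ω + ω, F (a - ω) x) = pi2 (a, b)
    rw [hx]
    congr 1
    ring
  have hTbij : Function.Bijective T := ⟨hTinj, hTsurj⟩
  -- the cocycle g on the torus
  set gR : ℝ × ℝ → ℝ := fun q => F q.1 q.2 - q.2 - ρ with hgR
  have hgR_perx : ∀ θ : ℝ, Function.Periodic (fun x => gR (θ, x)) 1 := by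
    intro θ x
    simp only [hgR, hFx]
    ring
  set g1 : ℝ → T1 → ℝ := fun θ => Function.Periodic.lift (hgR_perx θ) with hg1
  have hg1_per : Function.Periodic g1 1 := by
    intro θ
    funext q
    obtain ⟨x, rfl⟩ := coe_surj q
    rw [hg1]
    simp only [Function.Periodic.lift_coe]
    simp only [hgR, hFθ]
  set gT : T1 × T1 → ℝ := fun p => (Function.Periodic.lift hg1_per p.1) p.2 with hgT
  have hgT_coe : ∀ q : ℝ × ℝ, gT (pi2 q) = gR q := by
    rintro ⟨θ, x⟩
    rw [hgT]
    show (Function.Periodic.lift hg1_per (θ : T1)) (x : T1) = gR (θ, x)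
    rw [Function.Periodic.lift_coe]
    rw [hg1]
    exact Function.Periodic.lift_coe _ _
  have hgT_cont : Continuous gT := by
    rw [← pi2_oq.continuous_comp_iff]
    have : gT ∘ pi2 = gR := funext hgT_coe
    rw [this]
    exact (hFc.sub continuous_snd).sub continuous_const
  -- iterates
  have hTn_coe : ∀ (n : ℕ) (θ x : ℝ),
      T^[n] (pi2 (θ, x)) = pi2 (θ + n * ω, fibIter F ω θ n x) := by
    intro n θ x
    induction n with
    | zero => simp [fibIter]
    | succ n ih =>
      rw [Function.iterate_succ_apply', ih, hTpi2]
      show pi2 (θ + n * ω + ω, F (θ + n * ω) (fibIter F ω θ n x)) = _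
      have h1 : θ + (n:ℝ) * ω + ω = θ + ((n:ℕ) + 1 : ℝ) * ω := by ring
      have h2 : ((n + 1 : ℕ) : ℝ) = (n : ℝ) + 1 := by push_cast; ring
      rw [h2, ← h1]
      rfl
  have hbirk_coe : ∀ (n : ℕ) (θ x : ℝ),
      ∑ k ∈ Finset.range n, gT (T^[k] (pi2 (θ, x))) = fibIter F ω θ n x - x - n * ρ := by
    intro n θ x
    induction n with
    | zero => simp [fibIter]
    | succ n ih =>
      rw [Finset.sum_range_succ, ih, hTn_coe, hgT_coe]
      show fibIter F ω θ n x - x - n * ρ + (F (θ + n * ω) (fibIter F ω θ n x)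
        - fibIter F ω θ n x - ρ) = _
      have : fibIter F ω θ (n+1) x = F (θ + n * ω) (fibIter F ω θ n x) := rfl
      rw [this]
      push_cast
      ring
  have hbd : ∀ (p : T1 × T1) (n : ℕ), |∑ k ∈ Finset.range n, gT (T^[k] p)| ≤ C := by
    intro p n
    obtain ⟨⟨θ, x⟩, rfl⟩ := pi2_surj p
    rw [hbirk_coe]
    exact hC θ x n
  -- minimal set and transfer function
  obtain ⟨M, u, hMne, hMcomp, hTM, hucont, hubd, htrans, hrec⟩ :=
    exists_minimal_transfer T hTcont hTbij gT hgT_cont C hbd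
  -- lifted minimal set and the function HM
  set Mh : Set (ℝ × ℝ) := pi2 ⁻¹' M with hMh
  set HM : ℝ × ℝ → ℝ := fun q => q.2 + u (pi2 q) with hHM
  have hMh_closed : IsClosed Mh := hMcomp.isClosed.preimage pi2_cont
  have hpi2_shift : ∀ (θ x : ℝ) (l m : ℤ), pi2 (θ + l, x + m) = pi2 (θ, x) := by
    intro θ x l m
    rw [hpi2]
    simp only [Prod.mk.injEq]
    exact ⟨coe_add_int θ l, coe_add_int x m⟩
  have hMh_shift : ∀ (θ x : ℝ) (l m : ℤ), ((θ + l, x + m) ∈ Mh ↔ (θ, x) ∈ Mh) := by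
    intro θ x l m
    show pi2 _ ∈ M ↔ pi2 _ ∈ M
    rw [hpi2_shift]
  have hHM_shift : ∀ (θ x : ℝ) (l m : ℤ), HM (θ + l, x + m) = HM (θ, x) + m := by
    intro θ x l m
    show (x + m) + u (pi2 (θ + l, x + m)) = (x + u (pi2 (θ, x))) + m
    rw [hpi2_shift]
    ring
  have hMhne : Mh.Nonempty := by
    obtain ⟨p, hp⟩ := hMne
    obtain ⟨q, rfl⟩ := pi2_surj p
    exact ⟨q, hp⟩
  have hHM_step : ∀ q : ℝ × ℝ, q ∈ Mh → HM (q.1 + ω, F q.1 q.2) = HM q + ρ := by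
    rintro ⟨θ, x⟩ hq
    show F θ x + u (pi2 (θ + ω, F θ x)) = (x + u (pi2 (θ, x))) + ρ
    have h1 : pi2 (θ + ω, F θ x) = T (pi2 (θ, x)) := (hTpi2 (θ, x)).symm
    rw [h1, htrans _ hq, hgT_coe]
    show F θ x + (u (pi2 (θ, x)) - (F θ x - x - ρ)) = _
    ring
  have hMh_step : ∀ q : ℝ × ℝ, (q ∈ Mh ↔ (q.1 + ω, F q.1 q.2) ∈ Mh) := by
    rintro ⟨θ, x⟩
    constructor
    · intro hq
      show pi2 (θ + ω, F θ x) ∈ M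
      rw [← hTpi2 (θ, x), ← hTM]
      exact mem_image_of_mem T hq
    · intro hq
      have h1 : T (pi2 (θ, x)) ∈ M := by rw [hTpi2]; exact hq
      rw [← hTM] at h1
      obtain ⟨p', hp', hp'eq⟩ := h1
      have : p' = pi2 (θ, x) := hTinj hp'eq
      rwa [this] at hp'
  have hMh_iter : ∀ (n : ℕ) (θ x : ℝ), (θ, x) ∈ Mh →
      (θ + n * ω, fibIter F ω θ n x) ∈ Mh := by
    intro n θ x hq
    induction n with
    | zero => simpa [fibIter] using hq
    | succ n ih =>
      have := (hMh_step (θ + n * ω, fibIter F ω θ n x)).mp ih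
      have harg : ((θ + (n:ℝ) * ω) + ω) = θ + ((n:ℕ) + 1 : ℝ) * ω := by ring
      have h2 : ((n + 1 : ℕ) : ℝ) = (n : ℝ) + 1 := by push_cast; ring
      rw [h2, ← harg]
      exact this
  have hHM_iter : ∀ (n : ℕ) (θ x : ℝ), (θ, x) ∈ Mh →
      HM (θ + n * ω, fibIter F ω θ n x) = HM (θ, x) + n * ρ := by
    intro n θ x hq
    induction n with
    | zero => simp [fibIter]
    | succ n ih =>
      have hmem := hMh_iter n θ x hq
      have := hHM_step (θ + n * ω, fibIter F ω θ n x) hmem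
      have harg : ((θ + (n:ℝ) * ω) + ω) = θ + ((n:ℕ) + 1 : ℝ) * ω := by ring
      have h2 : ((n + 1 : ℕ) : ℝ) = (n : ℝ) + 1 := by push_cast; ring
      rw [h2, ← harg]
      rw [show fibIter F ω θ (n+1) x = F (θ + n * ω) (fibIter F ω θ n x) from rfl]
      rw [this, ih]
      ring
  have hHM_seq : ∀ (z : ℕ → ℝ × ℝ) (w : ℝ × ℝ), (∀ k, z k ∈ Mh) →
      Tendsto z atTop (nhds w) →
      w ∈ Mh ∧ Tendsto (fun k => HM (z k)) atTop (nhds (HM w)) := by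
    intro z w hz hlim
    have hwMh : w ∈ Mh :=
      hMh_closed.mem_of_tendsto hlim (Eventually.of_forall hz)
    refine ⟨hwMh, ?_⟩
    have h1 : Tendsto (fun k => (z k).2) atTop (nhds w.2) :=
      (continuous_snd.tendsto w).comp hlim
    have h2 : Tendsto (fun k => u (pi2 (z k))) atTop (nhds (u (pi2 w))) := by
      have hcw : ContinuousWithinAt u M (pi2 w) := hucont (pi2 w) hwMh
      apply hcw.tendsto.comp
      rw [tendsto_nhdsWithin_iff]
      exact ⟨(pi2_cont.tendsto w).comp hlim, Eventually.of_forall fun k => hz k⟩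
    exact h1.add h2
  -- Monotonicity of HM on fibres of Mh
  have hMONO : ∀ (θ x y : ℝ), (θ, x) ∈ Mh → (θ, y) ∈ Mh → x ≤ y →
      HM (θ, x) ≤ HM (θ, y) := by
    set A1 : Set (ℝ × ℝ × ℝ) := {a | a.1 ∈ Icc (0:ℝ) 1 ∧ a.2.1 ∈ Icc (0:ℝ) 1 ∧
      a.2.1 ≤ a.2.2 ∧ a.2.2 ≤ a.2.1 + 1 ∧ (a.1, a.2.1) ∈ Mh ∧ (a.1, a.2.2) ∈ Mh} with hA1
    set ψ : ℝ × ℝ × ℝ → ℝ := fun a => HM (a.1, a.2.2) - HM (a.1, a.2.1) with hψ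
    have hA1closed : IsClosed A1 := by
      apply IsClosed.inter
      · exact isClosed_Icc.preimage continuous_fst
      apply IsClosed.inter
      · exact isClosed_Icc.preimage (continuous_fst.comp continuous_snd)
      apply IsClosed.inter
      · exact isClosed_le (continuous_fst.comp continuous_snd)
          (continuous_snd.comp continuous_snd)
      apply IsClosed.inter
      · exact isClosed_le (continuous_snd.comp continuous_snd)
          ((continuous_fst.comp continuous_snd).add continuous_const)
      apply IsClosed.inter
      · exact hMh_closed.preimage
          (continuous_fst.prodMk (continuous_fst.comp continuous_snd))
      · exact hMh_closed.preimage
          (continuous_fst.prodMk (continuous_snd.comp continuous_snd))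
    have hA1comp : IsCompact A1 := by
      apply IsCompact.of_isClosed_subset
        ((isCompact_Icc (a := (0:ℝ)) (b := 1)).prod
          ((isCompact_Icc (a := (0:ℝ)) (b := 1)).prod (isCompact_Icc (a := (0:ℝ)) (b := 2))))
        hA1closed
      rintro a ⟨h1, h2, h3, h4, -, -⟩
      exact ⟨h1, h2, ⟨le_trans h2.1 h3, le_trans h4 (by linarith [h2.2])⟩⟩
    have hψcont : ContinuousOn ψ A1 := by
      have c1 : ContinuousOn (fun a : ℝ × ℝ × ℝ => u (pi2 (a.1, a.2.2))) A1 := by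
        apply hucont.comp
          ((pi2_cont.comp (continuous_fst.prodMk
            (continuous_snd.comp continuous_snd))).continuousOn)
        rintro a ⟨-, -, -, -, -, h6⟩
        exact h6
      have c2 : ContinuousOn (fun a : ℝ × ℝ × ℝ => u (pi2 (a.1, a.2.1))) A1 := by
        apply hucont.comp
          ((pi2_cont.comp (continuous_fst.prodMk
            (continuous_fst.comp continuous_snd))).continuousOn)
        rintro a ⟨-, -, -, -, h5, -⟩
        exact h5
      have : ψ = fun a : ℝ × ℝ × ℝ => (a.2.2 + u (pi2 (a.1, a.2.2)))
          - (a.2.1 + u (pi2 (a.1, a.2.1))) := rfl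
      rw [this]
      exact (((continuous_snd.comp continuous_snd).continuousOn).add c1).sub
        (((continuous_fst.comp continuous_snd).continuousOn).add c2)
    have hNORM : ∀ (θ x y : ℝ), (θ, x) ∈ Mh → (θ, y) ∈ Mh → x ≤ y → y ≤ x + 1 →
        ∃ a ∈ A1, ψ a = HM (θ, y) - HM (θ, x) := by
      intro θ x y hx hy hxy hyx
      refine ⟨(θ + (-⌊θ⌋ : ℤ), x + (-⌊x⌋ : ℤ), y + (-⌊x⌋ : ℤ)), ?_, ?_⟩
      · refine ⟨?_, ?_, by push_cast; linarith, by push_cast; linarith,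
          (hMh_shift θ x _ _).mpr hx, (hMh_shift θ y _ _).mpr hy⟩
        · constructor
          · push_cast
            linarith [Int.floor_le θ]
          · push_cast
            linarith [Int.lt_floor_add_one θ]
        · constructor
          · push_cast
            linarith [Int.floor_le x]
          · push_cast
            linarith [Int.lt_floor_add_one x]
      · show HM (θ + (-⌊θ⌋ : ℤ), y + (-⌊x⌋ : ℤ)) - HM (θ + (-⌊θ⌋ : ℤ), x + (-⌊x⌋ : ℤ)) = _
        rw [hHM_shift θ y (-⌊θ⌋) (-⌊x⌋), hHM_shift θ x (-⌊θ⌋) (-⌊x⌋)]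
        ring
    obtain ⟨⟨θd, xd⟩, hqd⟩ := hMhne
    obtain ⟨ad, hadA, hadψ⟩ := hNORM θd xd xd hqd hqd le_rfl (by linarith)
    have hA1ne : A1.Nonempty := ⟨ad, hadA⟩
    obtain ⟨a₀, ha₀A, ha₀min⟩ := hA1comp.exists_isMinOn hA1ne hψcont
    set β : ℝ := ψ a₀ with hβ
    have hβ0 : β ≤ 0 := by
      have h2 : ψ a₀ ≤ ψ ad := ha₀min hadA
      rw [hadψ, sub_self] at h2
      exact h2
    have hβnn : 0 ≤ β := by
      by_contra hβneg
      push_neg at hβneg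
      obtain ⟨hθ₀I, hx₀I, hxy₀, hyx₀, hx₀M, hy₀M⟩ := ha₀A
      set θ₀ : ℝ := a₀.1 with hθ₀
      set x₀ : ℝ := a₀.2.1 with hx₀
      set y₀ : ℝ := a₀.2.2 with hy₀
      -- recurrence: pick returns of the orbit of (θ₀, y₀) near (θ₀, x₀)
      have hclos : ∀ k : ℕ, ∃ (z : ℝ × ℝ) (n : ℕ) (l m : ℤ),
          dist z (θ₀, x₀) < 1 / (k + 1) ∧
          z.1 = θ₀ + n * ω + l ∧ z.2 = fibIter F ω θ₀ n y₀ + m := by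
        intro k
        have hrec' := hrec (pi2 (θ₀, x₀)) (pi2 (θ₀, y₀)) hx₀M hy₀M 0
        have hsub := (pi2_oq.isOpenMap.preimage_closure_subset_closure_preimage
          (s := {y | ∃ n, 0 ≤ n ∧ y = T^[n] (pi2 (θ₀, y₀))}))
        have hmem : (θ₀, x₀) ∈ closure (pi2 ⁻¹' {y | ∃ n, 0 ≤ n ∧ y = T^[n] (pi2 (θ₀, y₀))}) :=
          hsub hrec'
        have hdist := Metric.mem_closure_iff.mp hmem (1 / (k + 1))
          (by positivity)
        obtain ⟨z, hzmem, hzdist⟩ := hdist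
        obtain ⟨n, -, hzn⟩ := hzmem
        rw [hTn_coe] at hzn
        have h1 : (z.1 : T1) = ((θ₀ + n * ω : ℝ) : T1) := congrArg Prod.fst hzn
        have h2 : (z.2 : T1) = ((fibIter F ω θ₀ n y₀ : ℝ) : T1) := congrArg Prod.snd hzn
        obtain ⟨l, hl⟩ := coe_eq_iff.mp h1
        obtain ⟨m, hm⟩ := coe_eq_iff.mp h2
        refine ⟨z, n, -l, -m, by rwa [dist_comm] at hzdist, ?_, ?_⟩
        · push_cast
          linarith
        · push_cast
          linarith
      choose zf nf lf mf hzdist hz1 hz2 using hclos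
      set gap : ℕ → ℝ := fun k => fibIter F ω θ₀ (nf k) y₀ - fibIter F ω θ₀ (nf k) x₀
        with hgap
      have hgapIcc : ∀ k, gap k ∈ Icc (0:ℝ) 1 := by
        intro k
        constructor
        · have := (fib_mono (ω := ω) hFm θ₀ (nf k)).monotone hxy₀
          rw [hgap]
          simp only
          linarith
        · have h1 : fibIter F ω θ₀ (nf k) y₀ ≤ fibIter F ω θ₀ (nf k) (x₀ + 1) :=
            (fib_mono (ω := ω) hFm θ₀ (nf k)).monotone hyx₀
          have h2 : fibIter F ω θ₀ (nf k) (x₀ + 1) = fibIter F ω θ₀ (nf k) x₀ + 1 := by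
            have h2a := fib_add_int (ω := ω) hFx θ₀ (nf k) x₀ 1
            push_cast at h2a
            exact h2a
          rw [hgap]
          simp only
          linarith
      set rf : ℕ → ℝ × ℝ := fun k => ((zf k).1, (zf k).2 - gap k) with hrf
      have hwMh : ∀ k, zf k ∈ Mh := by
        intro k
        have h1 := hMh_iter (nf k) θ₀ y₀ hy₀M
        have h2 := (hMh_shift (θ₀ + (nf k) * ω) (fibIter F ω θ₀ (nf k) y₀)
          (lf k) (mf k)).mpr h1
        have : ((θ₀ + (nf k) * ω + lf k : ℝ), (fibIter F ω θ₀ (nf k) y₀ + mf k : ℝ))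
            = zf k := by
          rw [← hz1 k, ← hz2 k]
        rwa [this] at h2
      have hrMh : ∀ k, rf k ∈ Mh := by
        intro k
        have h1 := hMh_iter (nf k) θ₀ x₀ hx₀M
        have h2 := (hMh_shift (θ₀ + (nf k) * ω) (fibIter F ω θ₀ (nf k) x₀)
          (lf k) (mf k)).mpr h1
        have : ((θ₀ + (nf k) * ω + lf k : ℝ), (fibIter F ω θ₀ (nf k) x₀ + mf k : ℝ))
            = rf k := by
          rw [hrf]
          simp only [Prod.mk.injEq]
          refine ⟨(hz1 k).symm, ?_⟩
          rw [hz2 k, hgap]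
          simp only
          ring
        rwa [this] at h2
      have hHMw : ∀ k, HM (zf k) = HM (θ₀, y₀) + (nf k) * ρ + mf k := by
        intro k
        have h1 := hHM_iter (nf k) θ₀ y₀ hy₀M
        have h2 := hHM_shift (θ₀ + (nf k) * ω) (fibIter F ω θ₀ (nf k) y₀) (lf k) (mf k)
        have h3 : ((θ₀ + (nf k) * ω + lf k : ℝ), (fibIter F ω θ₀ (nf k) y₀ + mf k : ℝ))
            = zf k := by rw [← hz1 k, ← hz2 k]
        rw [h3] at h2
        rw [h2, h1]
        all_goals ring
      have hHMr : ∀ k, HM (rf k) = HM (θ₀, x₀) + (nf k) * ρ + mf k := by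
        intro k
        have h1 := hHM_iter (nf k) θ₀ x₀ hx₀M
        have h2 := hHM_shift (θ₀ + (nf k) * ω) (fibIter F ω θ₀ (nf k) x₀) (lf k) (mf k)
        have h3 : ((θ₀ + (nf k) * ω + lf k : ℝ), (fibIter F ω θ₀ (nf k) x₀ + mf k : ℝ))
            = rf k := by
          rw [hrf]
          simp only [Prod.mk.injEq]
          refine ⟨(hz1 k).symm, ?_⟩
          rw [hz2 k, hgap]
          simp only
          ring
        rw [h3] at h2
        rw [h2, h1]
        all_goals ring
      have hHMdiff : ∀ k, HM (zf k) - HM (rf k) = β := by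
        intro k
        rw [hHMw k, hHMr k]
        have : β = HM (θ₀, y₀) - HM (θ₀, x₀) := rfl
        rw [this]
        ring
      have hzlim : Tendsto zf atTop (nhds (θ₀, x₀)) := by
        rw [Metric.tendsto_atTop]
        intro ε hε
        obtain ⟨N, hN⟩ := exists_nat_one_div_lt hε
        refine ⟨N, fun k hk => ?_⟩
        calc dist (zf k) (θ₀, x₀) < 1 / (k + 1) := hzdist k
          _ ≤ 1 / (N + 1) := by
              have hcast : (N:ℝ) + 1 ≤ (k:ℝ) + 1 := by
                have h5 : (N:ℝ) ≤ (k:ℝ) := by exact_mod_cast hk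
                linarith
              exact div_le_div_of_nonneg_left (by norm_num) (by positivity) hcast
          _ < ε := hN
      obtain ⟨γ, hγIcc, ζ, hζmono, hγlim⟩ :=
        tendsto_subseq_of_bounded (Metric.isBounded_Icc (0:ℝ) 1) hgapIcc
      rw [isClosed_Icc.closure_eq] at hγIcc
      have hrlim : Tendsto (fun k => rf (ζ k)) atTop (nhds (θ₀, x₀ - γ)) := by
        have h1 : Tendsto (fun k => zf (ζ k)) atTop (nhds (θ₀, x₀)) :=
          hzlim.comp hζmono.tendsto_atTop
        have h2 : Tendsto (fun k => (zf (ζ k)).1) atTop (nhds θ₀) :=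
          (continuous_fst.tendsto _).comp h1
        have h3 : Tendsto (fun k => (zf (ζ k)).2) atTop (nhds x₀) :=
          (continuous_snd.tendsto _).comp h1
        exact h2.prodMk_nhds (h3.sub hγlim)
      obtain ⟨hrinfMh, hHMrlim⟩ := hHM_seq (fun k => rf (ζ k)) (θ₀, x₀ - γ)
        (fun k => hrMh (ζ k)) hrlim
      obtain ⟨-, hHMzlim⟩ := hHM_seq (fun k => zf (ζ k)) (θ₀, x₀)
        (fun k => hwMh (ζ k)) (hzlim.comp hζmono.tendsto_atTop)
      have hHMrinf : HM (θ₀, x₀ - γ) = HM (θ₀, x₀) - β := by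
        have h1 : Tendsto (fun k => HM (zf (ζ k)) - β) atTop (nhds (HM (θ₀, x₀) - β)) :=
          hHMzlim.sub tendsto_const_nhds
        have h2 : (fun k => HM (zf (ζ k)) - β) = fun k => HM (rf (ζ k)) := by
          funext k
          have := hHMdiff (ζ k)
          linarith
        rw [h2] at h1
        exact tendsto_nhds_unique hHMrlim h1
      -- derive the contradiction
      have hγ0 : 0 ≤ γ := hγIcc.1
      have hγ1 : γ ≤ 1 := hγIcc.2
      rcases le_or_gt (y₀ - (x₀ - γ)) 1 with hcase | hcase
      · obtain ⟨a, haA, haψ⟩ := hNORM θ₀ (x₀ - γ) y₀ hrinfMh hy₀M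
          (by linarith) (by linarith)
        have hge : ψ a₀ ≤ ψ a := ha₀min haA
        rw [haψ, hHMrinf] at hge
        have hthis : β = HM (θ₀, y₀) - HM (θ₀, x₀) := rfl
        have hβexp : HM (θ₀, y₀) - (HM (θ₀, x₀) - β) = 2 * β := by
          rw [hthis]; ring
        rw [hβexp] at hge
        rw [← hβ] at hge
        linarith
      · have hr'Mh : (θ₀, (x₀ - γ) + (1:ℤ)) ∈ Mh := by
          have := (hMh_shift θ₀ (x₀ - γ) 0 1).mpr hrinfMh
          simpa using this
        have hr'Mh' : (θ₀, x₀ - γ + 1) ∈ Mh := by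
          have h := hr'Mh
          push_cast at h
          exact h
        have hHMr' : HM (θ₀, x₀ - γ + 1) = HM (θ₀, x₀) - β + 1 := by
          have := hHM_shift θ₀ (x₀ - γ) 0 1
          push_cast at this
          simp only [add_zero] at this
          rw [this, hHMrinf]
        obtain ⟨a, haA, haψ⟩ := hNORM θ₀ (x₀ - γ + 1) y₀ hr'Mh' hy₀M
          (by linarith) (by linarith)
        have hge : ψ a₀ ≤ ψ a := ha₀min haA
        rw [haψ, hHMr'] at hge
        have hthis : β = HM (θ₀, y₀) - HM (θ₀, x₀) := rfl
        have hβexp : HM (θ₀, y₀) - (HM (θ₀, x₀) - β + 1) = 2 * β - 1 := by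
          rw [hthis]; ring
        rw [hβexp] at hge
        rw [← hβ] at hge
        linarith
    -- conclude monotonicity
    have hMONO1 : ∀ (θ x y : ℝ), (θ, x) ∈ Mh → (θ, y) ∈ Mh → x ≤ y → y ≤ x + 1 →
        HM (θ, x) ≤ HM (θ, y) := by
      intro θ x y hx hy hxy hyx
      obtain ⟨a, haA, haψ⟩ := hNORM θ x y hx hy hxy hyx
      have hge : ψ a₀ ≤ ψ a := ha₀min haA
      rw [haψ, ← hβ] at hge
      have h2 : (0:ℝ) ≤ HM (θ, y) - HM (θ, x) := le_trans hβnn hge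
      linarith
    intro θ x y hx hy hxy
    set k : ℤ := ⌊y - x⌋ with hk
    have hk0 : 0 ≤ k := Int.floor_nonneg.mpr (by linarith)
    have hxk : x + k ≤ y := by
      have := Int.floor_le (y - x)
      rw [← hk] at this
      linarith
    have hyk : y ≤ (x + k) + 1 := by
      have := Int.lt_floor_add_one (y - x)
      rw [← hk] at this
      linarith
    have hxkMh : (θ, x + k) ∈ Mh := by
      have := (hMh_shift θ x 0 k).mpr hx
      simpa using this
    have h1 : HM (θ, x + k) ≤ HM (θ, y) := hMONO1 θ (x + k) y hxkMh hy hxk hyk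
    have h2 : HM (θ, x + k) = HM (θ, x) + k := by
      have := hHM_shift θ x 0 k
      simpa using this
    have h3 : (0:ℝ) ≤ (k:ℝ) := by exact_mod_cast hk0
    linarith
  -- fibrewise surjectivity of HM on Mh (uses Kronecker density)
  have hcoec : Continuous ((↑) : ℝ → T1) :=
    (QuotientAddGroup.isOpenQuotientMap_mk (N := AddSubgroup.zmultiples (1:ℝ))).continuous
  have hONTO : ∀ θ t : ℝ, ∃ x, (θ, x) ∈ Mh ∧ HM (θ, x) = t := by
    set R : T1 × T1 → T1 × T1 :=
      fun c => (c.1 + ((ω : ℝ) : T1), c.2 + ((ρ : ℝ) : T1)) with hR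
    set η : T1 × T1 → T1 × T1 := fun p => (p.1, p.2 + ((u p : ℝ) : T1)) with hη
    have hηcont : ContinuousOn η M := by
      apply ContinuousOn.prodMk continuousOn_fst
      apply ContinuousOn.add continuousOn_snd
      exact hcoec.comp_continuousOn hucont
    set ηM : Set (T1 × T1) := η '' M with hηM
    have hηMcomp : IsCompact ηM := hMcomp.image_of_continuousOn hηcont
    have hηMclosed : IsClosed ηM := hηMcomp.isClosed
    have hηMne : ηM.Nonempty := hMne.image η
    have hηstep : ∀ p ∈ M, η (T p) = R (η p) := by
      intro p hp
      obtain ⟨⟨θ, x⟩, rfl⟩ := pi2_surj p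
      have hu : u (T (pi2 (θ, x))) = u (pi2 (θ, x)) - (F θ x - x - ρ) := by
        rw [htrans _ hp, hgT_coe]
      rw [hTpi2]
      have hu2 : u (pi2 ((θ, x).1 + ω, F (θ, x).1 (θ, x).2))
          = u (pi2 (θ, x)) - (F θ x - x - ρ) := by
        rw [← hTpi2 (θ, x)]
        exact hu
      apply Prod.ext
      · show ((θ + ω : ℝ) : T1) = ((θ:ℝ) : T1) + ((ω:ℝ) : T1)
        rw [← AddCircle.coe_add]
      · show ((F θ x : ℝ) : T1) + ((u (pi2 ((θ, x).1 + ω, F (θ, x).1 (θ, x).2)) : ℝ) : T1)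
            = ((x : ℝ) : T1) + ((u (pi2 (θ, x)) : ℝ) : T1) + ((ρ : ℝ) : T1)
        rw [hu2, ← AddCircle.coe_add, ← AddCircle.coe_add, ← AddCircle.coe_add]
        congr 1
        ring
    have hηMR : ηM = R '' ηM := by
      have h1 : η '' M = η '' (T '' M) := by rw [hTM]
      have h2 : η '' (T '' M) = (η ∘ T) '' M := (Set.image_comp η T M).symm
      have h3 : (η ∘ T) '' M = (R ∘ η) '' M :=
        Set.image_congr fun p hp => hηstep p hp
      have h4 : (R ∘ η) '' M = R '' (η '' M) := Set.image_comp R η M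
      calc ηM = η '' M := hηM
        _ = η '' (T '' M) := h1
        _ = (η ∘ T) '' M := h2
        _ = (R ∘ η) '' M := h3
        _ = R '' (η '' M) := h4
        _ = R '' ηM := by rw [← hηM]
    have hRinj : Function.Injective R := by
      rintro ⟨c1, c2⟩ ⟨c1', c2'⟩ hcc
      have h1 := (Prod.ext_iff.mp hcc).1
      have h2 := (Prod.ext_iff.mp hcc).2
      simp only [hR] at h1 h2
      exact Prod.ext (by exact add_right_cancel h1) (by exact add_right_cancel h2)
    have hRmem : ∀ (n : ℤ) (c : T1 × T1), c ∈ ηM →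
        (c.1 + ((n * ω : ℝ) : T1), c.2 + ((n * ρ : ℝ) : T1)) ∈ ηM := by
      intro n
      induction n using Int.induction_on with
      | zero =>
        intro c hc
        simpa using hc
      | succ n ih =>
        intro c hc
        have h1 := ih c hc
        have h2 : R ((c.1 + (((n:ℤ) * ω : ℝ) : T1), c.2 + (((n:ℤ) * ρ : ℝ) : T1))) ∈ ηM := by
          rw [hηMR]
          exact mem_image_of_mem R h1
        have h3 : R ((c.1 + (((n:ℤ) * ω : ℝ) : T1), c.2 + (((n:ℤ) * ρ : ℝ) : T1)))
            = (c.1 + (((n + 1 : ℤ) * ω : ℝ) : T1), c.2 + (((n + 1 : ℤ) * ρ : ℝ) : T1)) := by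
          rw [hR]
          simp only [Prod.mk.injEq]
          constructor
          · rw [add_assoc, ← AddCircle.coe_add]
            congr 2
            push_cast
            ring
          · rw [add_assoc, ← AddCircle.coe_add]
            congr 2
            push_cast
            ring
        rwa [h3] at h2
      | pred n ih =>
        intro c hc
        have h1 := ih c hc
        rw [hηMR] at h1
        obtain ⟨d, hd, hdeq⟩ := h1
        have h3 : R ((c.1 + (((-n - 1 : ℤ) * ω : ℝ) : T1), c.2 + (((-n - 1 : ℤ) * ρ : ℝ) : T1)))
            = (c.1 + (((-n : ℤ) * ω : ℝ) : T1), c.2 + (((-n : ℤ) * ρ : ℝ) : T1)) := by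
          rw [hR]
          simp only [Prod.mk.injEq]
          constructor
          · rw [add_assoc, ← AddCircle.coe_add]
            congr 2
            push_cast
            ring
          · rw [add_assoc, ← AddCircle.coe_add]
            congr 2
            push_cast
            ring
        rw [← h3] at hdeq
        have := hRinj hdeq
        rwa [← this]
    intro θ t
    obtain ⟨c₀, hc₀⟩ := hηMne
    obtain ⟨a₀, ha₀⟩ := coe_surj c₀.1
    obtain ⟨b₀, hb₀⟩ := coe_surj c₀.2
    have hpts : ∀ k : ℕ, ∃ v : ℝ × ℝ, pi2 v ∈ ηM ∧ dist v (θ, t) < 1 / (k + 1) := by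
      intro k
      obtain ⟨n, l, kk, h1, h2⟩ := kron hirr hind (θ - a₀) (t - b₀) (1 / (k + 1))
        (by positivity)
      refine ⟨(a₀ + (n * ω + l), b₀ + (n * ρ + kk)), ?_, ?_⟩
      · have hmem := hRmem n c₀ hc₀
        have heq : pi2 (a₀ + (n * ω + l), b₀ + (n * ρ + kk))
            = (c₀.1 + ((n * ω : ℝ) : T1), c₀.2 + ((n * ρ : ℝ) : T1)) := by
          rw [hpi2]
          simp only [Prod.mk.injEq]
          constructor
          · have : (a₀ + ((n:ℝ) * ω + l) : ℝ) = (a₀ + (n:ℝ) * ω) + l := by ring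
            rw [this, coe_add_int, AddCircle.coe_add, ha₀]
          · have : (b₀ + ((n:ℝ) * ρ + kk) : ℝ) = (b₀ + (n:ℝ) * ρ) + kk := by ring
            rw [this, coe_add_int, AddCircle.coe_add, hb₀]
        rw [heq]
        exact hmem
      · rw [Prod.dist_eq]
        apply max_lt
        · rw [Real.dist_eq]
          have : a₀ + ((n:ℝ) * ω + l) - θ = ((n:ℝ) * ω + l - (θ - a₀)) := by ring
          rw [this]
          exact h1
        · rw [Real.dist_eq]
          have : b₀ + ((n:ℝ) * ρ + kk) - t = ((n:ℝ) * ρ + kk - (t - b₀)) := by ring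
          rw [this]
          exact h2
    choose vf hvmem hvdist using hpts
    have hvlim : Tendsto vf atTop (nhds (θ, t)) := by
      rw [Metric.tendsto_atTop]
      intro ε hε
      obtain ⟨N, hN⟩ := exists_nat_one_div_lt hε
      refine ⟨N, fun k hk => ?_⟩
      calc dist (vf k) (θ, t) < 1 / (k + 1) := hvdist k
        _ ≤ 1 / (N + 1) := by
            have hcast : (N:ℝ) + 1 ≤ (k:ℝ) + 1 := by
              have h5 : (N:ℝ) ≤ (k:ℝ) := by exact_mod_cast hk
              linarith
            exact div_le_div_of_nonneg_left (by norm_num) (by positivity) hcast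
        _ < ε := hN
    have htarget : pi2 (θ, t) ∈ ηM := by
      apply hηMclosed.mem_of_tendsto ((pi2_cont.tendsto (θ, t)).comp hvlim)
      exact Eventually.of_forall fun k => hvmem k
    obtain ⟨p, hpM, hpeq⟩ := htarget
    have hfst : p.1 = ((θ : ℝ) : T1) := congrArg Prod.fst hpeq
    obtain ⟨x'', hx''⟩ := coe_surj p.2
    have hp' : pi2 (θ, x'') = p := by
      rw [hpi2]
      exact Prod.ext hfst.symm hx''
    have hmemMh : (θ, x'') ∈ Mh := by
      show pi2 (θ, x'') ∈ M
      rw [hp']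
      exact hpM
    have hsnd : p.2 + ((u p : ℝ) : T1) = ((t : ℝ) : T1) := congrArg Prod.snd hpeq
    rw [← hx'', ← AddCircle.coe_add] at hsnd
    obtain ⟨m, hm⟩ := coe_eq_iff.mp hsnd
    have hx'mem : (θ, x'' + m) ∈ Mh := by
      have h6 := (hMh_shift θ x'' 0 m).mpr hmemMh
      simpa using h6
    refine ⟨x'' + m, hx'mem, ?_⟩
    have hHMval : HM (θ, x'' + m) = HM (θ, x'') + m := by
      have h7 := hHM_shift θ x'' 0 m
      simpa using h7
    rw [hHMval]
    show (x'' + u (pi2 (θ, x''))) + m = t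
    rw [hp']
    linarith [hm]
  -- the monotone extension Hfin
  set SL : ℝ → ℝ → Set ℝ := fun θ x => {t | ∃ z, (θ, z) ∈ Mh ∧ z ≤ x ∧ HM (θ, z) = t}
    with hSL
  set SU : ℝ → ℝ → Set ℝ := fun θ x => {t | ∃ z, (θ, z) ∈ Mh ∧ x ≤ z ∧ HM (θ, z) = t}
    with hSU
  have hHMu : ∀ θ z : ℝ, (θ, z) ∈ Mh → |HM (θ, z) - z| ≤ C := by
    intro θ z hz
    show |(z + u (pi2 (θ, z))) - z| ≤ C
    have := hubd (pi2 (θ, z)) hz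
    simpa using this
  have hSLne : ∀ θ x : ℝ, (SL θ x).Nonempty := by
    intro θ x
    obtain ⟨z, hz, hHMz⟩ := hONTO θ (x - C - 1)
    refine ⟨x - C - 1, z, hz, ?_, hHMz⟩
    have := hHMu θ z hz
    rw [hHMz, abs_le] at this
    linarith [this.1]
  have hSUne : ∀ θ x : ℝ, (SU θ x).Nonempty := by
    intro θ x
    obtain ⟨z, hz, hHMz⟩ := hONTO θ (x + C + 1)
    refine ⟨x + C + 1, z, hz, ?_, hHMz⟩
    have := hHMu θ z hz
    rw [hHMz, abs_le] at this
    linarith [this.2]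
  have hSLbdd : ∀ θ x : ℝ, BddAbove (SL θ x) := by
    intro θ x
    refine ⟨x + C, ?_⟩
    rintro t ⟨z, hz, hzx, rfl⟩
    have := hHMu θ z hz
    rw [abs_le] at this
    linarith [this.2]
  have hSUbdd : ∀ θ x : ℝ, BddBelow (SU θ x) := by
    intro θ x
    refine ⟨x - C, ?_⟩
    rintro t ⟨z, hz, hzx, rfl⟩
    have := hHMu θ z hz
    rw [abs_le] at this
    linarith [this.1]
  set Hfin : ℝ → ℝ → ℝ := fun θ x => sSup (SL θ x) with hHfin
  have hLU : ∀ θ x : ℝ, ∀ t ∈ SL θ x, ∀ s ∈ SU θ x, t ≤ s := by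
    rintro θ x t ⟨z, hz, hzx, rfl⟩ s ⟨z', hz', hxz', rfl⟩
    exact hMONO θ z z' hz hz' (le_trans hzx hxz')
  have hsupinf : ∀ θ x : ℝ, Hfin θ x = sInf (SU θ x) := by
    intro θ x
    apply le_antisymm
    · apply csSup_le (hSLne θ x)
      intro t ht
      apply le_csInf (hSUne θ x)
      intro s hs
      exact hLU θ x t ht s hs
    · by_contra hcon
      push_neg at hcon
      set mid : ℝ := (Hfin θ x + sInf (SU θ x)) / 2 with hmid
      obtain ⟨z, hz, hHMz⟩ := hONTO θ mid
      rcases le_or_gt z x with hcase | hcase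
      · have h1 : mid ∈ SL θ x := ⟨z, hz, hcase, hHMz⟩
        have h2 : mid ≤ Hfin θ x := le_csSup (hSLbdd θ x) h1
        rw [hmid] at h2
        linarith
      · have h1 : mid ∈ SU θ x := ⟨z, hz, le_of_lt hcase, hHMz⟩
        have h2 : sInf (SU θ x) ≤ mid := csInf_le (hSUbdd θ x) h1
        rw [hmid] at h2
        linarith
  have hmem_le : ∀ θ x z : ℝ, (θ, z) ∈ Mh → z ≤ x → HM (θ, z) ≤ Hfin θ x :=
    fun θ x z hz hzx => le_csSup (hSLbdd θ x) ⟨z, hz, hzx, rfl⟩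
  have hmem_ge : ∀ θ x z : ℝ, (θ, z) ∈ Mh → x ≤ z → Hfin θ x ≤ HM (θ, z) := by
    intro θ x z hz hxz
    rw [hsupinf]
    exact csInf_le (hSUbdd θ x) ⟨z, hz, hxz, rfl⟩
  have hmono : ∀ θ : ℝ, Monotone (Hfin θ) := by
    intro θ x x' hxx'
    apply csSup_le_csSup (hSLbdd θ x') (hSLne θ x)
    rintro t ⟨z, hz, hzx, rfl⟩
    exact ⟨z, hz, le_trans hzx hxx', rfl⟩
  have hshift0 : ∀ (θ z : ℝ) (m : ℤ), (θ, z) ∈ Mh → (θ, z + (m:ℝ)) ∈ Mh := by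
    intro θ z m hz
    have h := (hMh_shift θ z 0 m).mpr hz
    simpa using h
  have hHMshift0 : ∀ (θ z : ℝ) (m : ℤ), HM (θ, z + (m:ℝ)) = HM (θ, z) + m := by
    intro θ z m
    have h := hHM_shift θ z 0 m
    simpa using h
  have hdegz : ∀ (θ x : ℝ) (m : ℤ), Hfin θ (x + m) = Hfin θ x + m := by
    intro θ x m
    have hlub2 : IsLUB (SL θ (x + (m:ℝ))) (Hfin θ x + m) := by
      constructor
      · rintro t ⟨z, hz, hzx, rfl⟩
        have h1 : (θ, z + ((-m : ℤ) : ℝ)) ∈ Mh := hshift0 θ z (-m) hz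
        have h2 : z + ((-m:ℤ):ℝ) ≤ x := by push_cast; linarith
        have h3 := hmem_le θ x _ h1 h2
        have h4 := hHMshift0 θ z (-m)
        push_cast at h3 h4
        linarith
      · intro b hb
        have h6 : ∀ t ∈ SL θ x, t ≤ b - m := by
          rintro t ⟨z, hz, hzx, rfl⟩
          have h1 : (θ, z + (m:ℝ)) ∈ Mh := hshift0 θ z m hz
          have h2 : HM (θ, z + (m:ℝ)) ∈ SL θ (x + (m:ℝ)) :=
            ⟨z + m, h1, by linarith, rfl⟩
          have h3 := hb h2
          rw [hHMshift0 θ z m] at h3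
          linarith
        have h7 := csSup_le (hSLne θ x) h6
        have : Hfin θ x ≤ b - m := h7
        linarith
    exact hlub2.csSup_eq (hSLne θ (x + m))
  have hshiftθ : ∀ θ z : ℝ, ((θ + 1, z) ∈ Mh ↔ (θ, z) ∈ Mh) := by
    intro θ z
    have h := hMh_shift θ z 1 0
    simpa using h
  have hHMshiftθ : ∀ θ z : ℝ, HM (θ + 1, z) = HM (θ, z) := by
    intro θ z
    have h := hHM_shift θ z 1 0
    simpa using h
  have hper : ∀ θ x : ℝ, Hfin (θ + 1) x = Hfin θ x := by
    intro θ x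
    have hset : SL (θ + 1) x = SL θ x := by
      ext t
      constructor
      · rintro ⟨z, hz, hzx, rfl⟩
        exact ⟨z, (hshiftθ θ z).mp hz, hzx, (hHMshiftθ θ z).symm⟩
      · rintro ⟨z, hz, hzx, rfl⟩
        exact ⟨z, (hshiftθ θ z).mpr hz, hzx, hHMshiftθ θ z⟩
    show sSup (SL (θ + 1) x) = sSup (SL θ x)
    rw [hset]
  have hequi : ∀ θ x : ℝ, Hfin (θ + ω) (F θ x) = Hfin θ x + ρ := by
    intro θ x
    have hlub2 : IsLUB (SL (θ + ω) (F θ x)) (Hfin θ x + ρ) := by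
      constructor
      · rintro t ⟨w, hw, hwx, rfl⟩
        obtain ⟨z, rfl⟩ := hFs θ w
        have h1 : (θ, z) ∈ Mh := (hMh_step (θ, z)).mpr hw
        have h2 : z ≤ x := ((hFm θ).le_iff_le).mp hwx
        have h3 := hmem_le θ x z h1 h2
        have h4 : HM (θ + ω, F θ z) = HM (θ, z) + ρ := hHM_step (θ, z) h1
        linarith
      · intro b hb
        have h6 : ∀ t ∈ SL θ x, t ≤ b - ρ := by
          rintro t ⟨z, hz, hzx, rfl⟩
          have h1 : (θ + ω, F θ z) ∈ Mh := (hMh_step (θ, z)).mp hz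
          have h4 : HM (θ + ω, F θ z) = HM (θ, z) + ρ := hHM_step (θ, z) hz
          have h2 : F θ z ≤ F θ x := (hFm θ).monotone hzx
          have h5 : HM (θ + ω, F θ z) ∈ SL (θ + ω) (F θ x) := ⟨F θ z, h1, h2, rfl⟩
          have h7 := hb h5
          linarith
        have h8 := csSup_le (hSLne θ x) h6
        have : Hfin θ x ≤ b - ρ := h8
        linarith
    exact hlub2.csSup_eq (hSLne (θ + ω) (F θ x))
  -- joint continuity of Hfin
  have hHfincont : Continuous (fun q : ℝ × ℝ => Hfin q.1 q.2) := by
    apply SeqContinuous.continuous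
    intro zq q hql
    set t : ℝ := Hfin q.1 q.2 with ht
    have hlow : ∀ ε : ℝ, 0 < ε → ∀ᶠ k in atTop,
        t - ε ≤ Hfin (zq k).1 (zq k).2 := by
      intro ε hε
      by_contra hcon
      rw [Filter.not_eventually] at hcon
      obtain ⟨φ, hφmono, hφ⟩ := Filter.extraction_of_frequently_atTop hcon
      push_neg at hφ
      have hch : ∀ k : ℕ, ∃ w, ((zq (φ k)).1, w) ∈ Mh ∧ HM ((zq (φ k)).1, w) = t - ε :=
        fun k => hONTO (zq (φ k)).1 (t - ε)
      choose wf hwf hHMwf using hch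
      have hwgt : ∀ k, (zq (φ k)).2 < wf k := by
        intro k
        by_contra hc
        push_neg at hc
        have := hmem_le (zq (φ k)).1 (zq (φ k)).2 (wf k) (hwf k) hc
        rw [hHMwf k] at this
        have h2 := hφ k
        linarith
      have hwbd : ∀ k, wf k ∈ Icc (t - ε - C) (t - ε + C) := by
        intro k
        have := hHMu (zq (φ k)).1 (wf k) (hwf k)
        rw [hHMwf k] at this
        rw [abs_le] at this
        constructor <;> linarith [this.1, this.2]
      obtain ⟨winf, hwinfIcc, ζ, hζmono, hwlim⟩ :=
        tendsto_subseq_of_bounded (Metric.isBounded_Icc (t - ε - C) (t - ε + C)) hwbd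
      have hq1lim : Tendsto (fun j => zq (φ (ζ j))) atTop (nhds q) :=
        hql.comp ((hφmono.comp hζmono).tendsto_atTop)
      have hptlim : Tendsto (fun j => ((zq (φ (ζ j))).1, wf (ζ j))) atTop
          (nhds (q.1, winf)) :=
        (((continuous_fst.tendsto q).comp hq1lim)).prodMk_nhds hwlim
      obtain ⟨hinfMh, hHMlim⟩ := hHM_seq _ _ (fun j => hwf (ζ j)) hptlim
      have hHMconst : HM (q.1, winf) = t - ε := by
        have h1 : Tendsto (fun j : ℕ => t - ε) atTop (nhds (t - ε)) := tendsto_const_nhds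
        have h2 : (fun j : ℕ => HM ((zq (φ (ζ j))).1, wf (ζ j))) = fun j : ℕ => t - ε := by
          funext j
          exact hHMwf (ζ j)
        rw [h2] at hHMlim
        exact tendsto_nhds_unique hHMlim h1
      have hwinfge : q.2 ≤ winf := by
        apply le_of_tendsto_of_tendsto'
          ((continuous_snd.tendsto q).comp hq1lim) hwlim
        intro j
        exact le_of_lt (hwgt (ζ j))
      have := hmem_ge q.1 q.2 winf hinfMh hwinfge
      rw [hHMconst] at this
      rw [← ht] at this
      linarith
    have hupp : ∀ ε : ℝ, 0 < ε → ∀ᶠ k in atTop,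
        Hfin (zq k).1 (zq k).2 ≤ t + ε := by
      intro ε hε
      by_contra hcon
      rw [Filter.not_eventually] at hcon
      obtain ⟨φ, hφmono, hφ⟩ := Filter.extraction_of_frequently_atTop hcon
      push_neg at hφ
      have hch : ∀ k : ℕ, ∃ w, ((zq (φ k)).1, w) ∈ Mh ∧ HM ((zq (φ k)).1, w) = t + ε :=
        fun k => hONTO (zq (φ k)).1 (t + ε)
      choose wf hwf hHMwf using hch
      have hwgt : ∀ k, wf k < (zq (φ k)).2 := by
        intro k
        by_contra hc
        push_neg at hc
        have := hmem_ge (zq (φ k)).1 (zq (φ k)).2 (wf k) (hwf k) hc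
        rw [hHMwf k] at this
        have h2 := hφ k
        linarith
      have hwbd : ∀ k, wf k ∈ Icc (t + ε - C) (t + ε + C) := by
        intro k
        have := hHMu (zq (φ k)).1 (wf k) (hwf k)
        rw [hHMwf k] at this
        rw [abs_le] at this
        constructor <;> linarith [this.1, this.2]
      obtain ⟨winf, hwinfIcc, ζ, hζmono, hwlim⟩ :=
        tendsto_subseq_of_bounded (Metric.isBounded_Icc (t + ε - C) (t + ε + C)) hwbd
      have hq1lim : Tendsto (fun j => zq (φ (ζ j))) atTop (nhds q) :=
        hql.comp ((hφmono.comp hζmono).tendsto_atTop)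
      have hptlim : Tendsto (fun j => ((zq (φ (ζ j))).1, wf (ζ j))) atTop
          (nhds (q.1, winf)) :=
        (((continuous_fst.tendsto q).comp hq1lim)).prodMk_nhds hwlim
      obtain ⟨hinfMh, hHMlim⟩ := hHM_seq _ _ (fun j => hwf (ζ j)) hptlim
      have hHMconst : HM (q.1, winf) = t + ε := by
        have h1 : Tendsto (fun j : ℕ => t + ε) atTop (nhds (t + ε)) := tendsto_const_nhds
        have h2 : (fun j : ℕ => HM ((zq (φ (ζ j))).1, wf (ζ j))) = fun j : ℕ => t + ε := by
          funext j
          exact hHMwf (ζ j)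
        rw [h2] at hHMlim
        exact tendsto_nhds_unique hHMlim h1
      have hwinfle : winf ≤ q.2 := by
        apply le_of_tendsto_of_tendsto' hwlim
          ((continuous_snd.tendsto q).comp hq1lim)
        intro j
        exact le_of_lt (hwgt (ζ j))
      have := hmem_le q.1 q.2 winf hinfMh hwinfle
      rw [hHMconst] at this
      rw [← ht] at this
      linarith
    rw [Metric.tendsto_atTop]
    intro ε hε
    have h1 := hlow (ε / 2) (by linarith)
    have h2 := hupp (ε / 2) (by linarith)
    obtain ⟨N1, hN1⟩ := eventually_atTop.mp h1
    obtain ⟨N2, hN2⟩ := eventually_atTop.mp h2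
    refine ⟨max N1 N2, fun k hk => ?_⟩
    have ha := hN1 k (le_trans (le_max_left _ _) hk)
    have hb := hN2 k (le_trans (le_max_right _ _) hk)
    show |Hfin (zq k).1 (zq k).2 - Hfin q.1 q.2| < ε
    rw [← ht, abs_lt]
    constructor <;> linarith
  -- descend to the torus
  have hdeg1 : ∀ θ x : ℝ, Hfin θ (x + 1) = Hfin θ x + 1 := by
    intro θ x
    have h := hdegz θ x 1
    push_cast at h
    exact h
  have hliftx : ∀ θ : ℝ, Function.Periodic (fun x : ℝ => ((Hfin θ x : ℝ) : T1)) 1 := by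
    intro θ x
    simp only
    rw [hdeg1]
    have h : (Hfin θ x + 1 : ℝ) = Hfin θ x + ((1:ℤ):ℝ) := by push_cast; ring
    rw [h, coe_add_int]
  set hinner : ℝ → T1 → T1 := fun θ => Function.Periodic.lift (hliftx θ) with hhinner
  have houter_per : Function.Periodic hinner 1 := by
    intro θ
    funext c
    obtain ⟨x, rfl⟩ := coe_surj c
    rw [hhinner]
    simp only [Function.Periodic.lift_coe]
    rw [hper]
  set hmap : T1 × T1 → T1 × T1 :=
    fun p => (p.1, (Function.Periodic.lift houter_per p.1) p.2) with hhmap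
  have hcoe2 : ∀ θ x : ℝ, hmap (pi2 (θ, x)) = (((θ : ℝ) : T1), ((Hfin θ x : ℝ) : T1)) := by
    intro θ x
    rw [hhmap]
    show (((θ:ℝ) : T1), (Function.Periodic.lift houter_per ((θ:ℝ):T1)) ((x:ℝ):T1)) = _
    rw [Function.Periodic.lift_coe]
    rw [hhinner]
    simp only [Function.Periodic.lift_coe]
  have hcont : Continuous hmap := by
    have hsnd2 : Continuous
        (fun p : T1 × T1 => (Function.Periodic.lift houter_per p.1) p.2) := by
      rw [← pi2_oq.continuous_comp_iff]
      have heq : (fun p : T1 × T1 => (Function.Periodic.lift houter_per p.1) p.2) ∘ pi2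
          = fun q : ℝ × ℝ => ((Hfin q.1 q.2 : ℝ) : T1) := by
        funext q
        show (Function.Periodic.lift houter_per ((q.1:ℝ):T1)) ((q.2:ℝ):T1) = _
        rw [Function.Periodic.lift_coe, hhinner]
        simp only [Function.Periodic.lift_coe]
      rw [heq]
      exact hcoec.comp hHfincont
    exact continuous_fst.prodMk hsnd2
  have hsurj : Function.Surjective hmap := by
    rintro ⟨b, c⟩
    obtain ⟨θ, rfl⟩ := coe_surj b
    obtain ⟨tc, rfl⟩ := coe_surj c
    have hcont1 : Continuous (fun x : ℝ => Hfin θ x) :=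
      hHfincont.comp ((continuous_const (y := θ)).prodMk continuous_id)
    obtain ⟨m1, hm1⟩ := exists_int_lt (tc - Hfin θ 0)
    obtain ⟨m2, hm2⟩ := exists_int_gt (tc - Hfin θ 0)
    have hm1m2 : ((m1:ℝ)) ≤ ((m2:ℝ)) := by linarith
    have hIcc : tc ∈ Icc (Hfin θ ((0:ℝ) + m1)) (Hfin θ ((0:ℝ) + m2)) := by
      rw [hdegz θ 0 m1, hdegz θ 0 m2]
      constructor <;> linarith
    have hsub := intermediate_value_Icc
      (by linarith : ((0:ℝ) + m1) ≤ ((0:ℝ) + m2)) hcont1.continuousOn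
    obtain ⟨x, -, hx⟩ := hsub hIcc
    refine ⟨pi2 (θ, x), ?_⟩
    rw [hcoe2]
    simp only at hx
    rw [hx]
  have hequiv : ∀ p, hmap (T p) = ((hmap p).1 + ((ω : ℝ) : T1),
      (hmap p).2 + ((ρ : ℝ) : T1)) := by
    intro p
    obtain ⟨⟨θ, x⟩, rfl⟩ := pi2_surj p
    rw [hTpi2]
    show hmap (pi2 ((θ, x).1 + ω, F (θ, x).1 (θ, x).2)) = _
    rw [hcoe2 θ x, hcoe2 ((θ, x).1 + ω) (F (θ, x).1 (θ, x).2)]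
    refine Prod.ext ?_ ?_
    · show ((θ + ω : ℝ) : T1) = ((θ:ℝ):T1) + ((ω:ℝ):T1)
      rw [← AddCircle.coe_add]
    · show ((Hfin (θ + ω) (F θ x) : ℝ) : T1) = ((Hfin θ x : ℝ):T1) + ((ρ:ℝ):T1)
      rw [hequi, ← AddCircle.coe_add]
  have hfst : ∀ p, (hmap p).1 = p.1 := by
    intro p
    obtain ⟨⟨θ, x⟩, rfl⟩ := pi2_surj p
    rw [hcoe2]
  exact ⟨hmap, hcont, hsurj, hequiv, hfst, Hfin, hmono, hdeg1, fun θ x => hcoe2 θ x⟩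

end RISC

/-- a regular system with rationally independent rotation numbers is
semi-conjugate to the irrational torus translation `R_{ω,ρ}` by a fibre-respecting
semi-conjugacy whose fibre maps are order-preserving (monotone degree-one) circle maps. -/
theorem regular_independent_semiconjugate
    (F : ℝ → ℝ → ℝ) (ω : ℝ) (hirr : Irrational ω)
    (hFc : Continuous fun p : ℝ × ℝ => F p.1 p.2)
    (hFm : ∀ θ : ℝ, StrictMono (F θ))
    (hFs : ∀ θ : ℝ, Function.Surjective (F θ))
    (hFx : ∀ θ x : ℝ, F θ (x + 1) = F θ x + 1)
    (hFθ : ∀ θ x : ℝ, F (θ + 1) x = F θ x)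
    (T : AddCircle (1:ℝ) × AddCircle (1:ℝ) → AddCircle (1:ℝ) × AddCircle (1:ℝ))
    (hproj : ∀ θ x : ℝ,
      T ((θ : AddCircle (1:ℝ)), (x : AddCircle (1:ℝ))) =
        (((θ + ω : ℝ) : AddCircle (1:ℝ)), ((F θ x : ℝ) : AddCircle (1:ℝ))))
    (ρ : ℝ)
    (hρ : ∀ θ x : ℝ, Tendsto (fun n : ℕ => (fibIter F ω θ n x - x) / n) atTop (nhds ρ))
    (hreg : ∃ C : ℝ, ∀ (θ x : ℝ) (n : ℕ), |fibIter F ω θ n x - x - n * ρ| ≤ C)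
    (hind : ∀ l k q : ℤ, (l : ℝ) + (k : ℝ) * ω + (q : ℝ) * ρ = 0 →
      l = 0 ∧ k = 0 ∧ q = 0) :
    ∃ h : AddCircle (1:ℝ) × AddCircle (1:ℝ) → AddCircle (1:ℝ) × AddCircle (1:ℝ),
      Continuous h ∧ Function.Surjective h ∧
      (∀ p, h (T p) = ((h p).1 + ((ω : ℝ) : AddCircle (1:ℝ)),
        (h p).2 + ((ρ : ℝ) : AddCircle (1:ℝ)))) ∧
      (∀ p, (h p).1 = p.1) ∧
      ∃ H : ℝ → ℝ → ℝ,
        (∀ θ : ℝ, Monotone (H θ)) ∧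
        (∀ θ x : ℝ, H θ (x + 1) = H θ x + 1) ∧
        (∀ θ x : ℝ, h ((θ : AddCircle (1:ℝ)), (x : AddCircle (1:ℝ))) =
          ((θ : AddCircle (1:ℝ)), ((H θ x : ℝ) : AddCircle (1:ℝ)))) := by
  exact RISC.main F ω hirr hFc hFm hFs hFx hFθ T hproj ρ hρ hreg hind

end
end

section
/- If T ∈ 𝒯_hom is irregular (no orbit of a lift is ρ_T-bounded), then T is topologically transitive: for any two nonempty open sets U, V ⊆ 𝕋² there exists n ∈ ℕ with Tⁿ(U) ∩ V ≠ ∅. -/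
open Set Filter Topology Function

noncomputable section

namespace IrrAux

variable {F : ℝ → ℝ → ℝ} {ω : ℝ}

lemma fib_zero (θ x : ℝ) : fibIter F ω θ 0 x = x := rfl

lemma fib_succ (θ x : ℝ) (n : ℕ) :
    fibIter F ω θ (n+1) x = F (θ + n * ω) (fibIter F ω θ n x) := rfl

lemma fib_mono (hFm : ∀ θ : ℝ, StrictMono (F θ)) (θ : ℝ) (n : ℕ) :
    StrictMono (fun x => fibIter F ω θ n x) := by
  induction n with
  | zero => exact fun a b h => h
  | succ n ih => exact fun a b h => hFm _ (ih h)

/-- translation by an integer for maps commuting with +1 -/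
lemma map_add_int {g : ℝ → ℝ} (hg : ∀ x, g (x + 1) = g x + 1) (k : ℤ) (x : ℝ) :
    g (x + k) = g x + k := by
  induction k using Int.induction_on with
  | zero => simp
  | succ n ih =>
      have : x + ((n : ℤ) + 1 : ℤ) = (x + (n : ℤ)) + 1 := by push_cast; ring
      rw [this, hg, ih]; push_cast; ring
  | pred n ih =>
      have h2 : x + (-(n : ℤ) - 1 : ℤ) + 1 = x + (-(n : ℤ) : ℤ) := by push_cast; ring
      have := hg (x + (-(n : ℤ) - 1 : ℤ))
      rw [h2, ih] at this
      have := this.symm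
      push_cast at this ⊢
      linarith

lemma per_add_int {h : ℝ → ℝ} (hh : ∀ θ, h (θ + 1) = h θ) (k : ℤ) (θ : ℝ) :
    h (θ + k) = h θ := by
  induction k using Int.induction_on with
  | zero => simp
  | succ n ih =>
      have : θ + ((n : ℤ) + 1 : ℤ) = (θ + (n : ℤ)) + 1 := by push_cast; ring
      rw [this, hh, ih]
  | pred n ih =>
      have h2 : θ + (-(n : ℤ) - 1 : ℤ) + 1 = θ + (-(n : ℤ) : ℤ) := by push_cast; ring
      have h3 := hh (θ + (-(n : ℤ) - 1 : ℤ))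
      rw [h2] at h3
      rw [h3] at ih
      exact ih

lemma fib_add_one (hFx : ∀ θ x : ℝ, F θ (x + 1) = F θ x + 1) (θ : ℝ) (n : ℕ) (x : ℝ) :
    fibIter F ω θ n (x + 1) = fibIter F ω θ n x + 1 := by
  induction n with
  | zero => rfl
  | succ n ih => rw [fib_succ, fib_succ, ih, hFx]

lemma fib_add_int (hFx : ∀ θ x : ℝ, F θ (x + 1) = F θ x + 1) (θ : ℝ) (n : ℕ) (k : ℤ) (x : ℝ) :
    fibIter F ω θ n (x + k) = fibIter F ω θ n x + k :=
  map_add_int (fun y => fib_add_one hFx θ n y) k x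

lemma fib_theta_add_one (hFθ : ∀ θ x : ℝ, F (θ + 1) x = F θ x) (θ : ℝ) (n : ℕ) (x : ℝ) :
    fibIter F ω (θ + 1) n x = fibIter F ω θ n x := by
  induction n with
  | zero => rfl
  | succ n ih =>
      rw [fib_succ, fib_succ, ih]
      have : θ + 1 + n * ω = (θ + n * ω) + 1 := by ring
      rw [this, hFθ]

lemma fib_theta_add_int (hFθ : ∀ θ x : ℝ, F (θ + 1) x = F θ x) (θ : ℝ) (n : ℕ) (k : ℤ)
    (x : ℝ) : fibIter F ω (θ + k) n x = fibIter F ω θ n x :=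
  per_add_int (h := fun β => fibIter F ω β n x) (fun β => fib_theta_add_one hFθ β n x) k θ

lemma fib_cont (hFc : Continuous fun p : ℝ × ℝ => F p.1 p.2) (n : ℕ) :
    Continuous fun p : ℝ × ℝ => fibIter F ω p.1 n p.2 := by
  induction n with
  | zero => exact continuous_snd
  | succ n ih =>
      exact hFc.comp ((continuous_fst.add continuous_const).prodMk ih)

lemma fib_add (θ x : ℝ) (n m : ℕ) :
    fibIter F ω θ (n + m) x = fibIter F ω (θ + n * ω) m (fibIter F ω θ n x) := by
  induction m with
  | zero => rfl
  | succ m ih =>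
      rw [show n + (m+1) = (n + m) + 1 from rfl, fib_succ, fib_succ, ih]
      have : θ + (↑(n + m) : ℝ) * ω = (θ + n * ω) + m * ω := by push_cast; ring
      rw [this]

lemma disp_le (hFm : ∀ θ : ℝ, StrictMono (F θ)) (hFx : ∀ θ x : ℝ, F θ (x + 1) = F θ x + 1)
    (θ : ℝ) (n : ℕ) (x y : ℝ) :
    fibIter F ω θ n y - y ≤ fibIter F ω θ n x - x + 1 := by
  have hk : y ≤ x + (⌈y - x⌉ : ℤ) := by
    have := Int.le_ceil (y - x); linarith
  have hmono := (fib_mono (ω := ω) hFm θ n).monotone hk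
  rw [fib_add_int hFx] at hmono
  have : (⌈y - x⌉ : ℝ) < y - x + 1 := Int.ceil_lt_add_one _
  linarith


lemma disp_fract (hFθ : ∀ θ x : ℝ, F (θ + 1) x = F θ x)
    (hFx : ∀ θ x : ℝ, F θ (x + 1) = F θ x + 1) (n : ℕ) (θ x : ℝ) :
    fibIter F ω (Int.fract θ) n (Int.fract x) - Int.fract x = fibIter F ω θ n x - x := by
  have hθ : θ = Int.fract θ + (⌊θ⌋ : ℤ) := by rw [Int.fract]; ring
  have hx : x = Int.fract x + (⌊x⌋ : ℤ) := by rw [Int.fract]; ring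
  have h1 : fibIter F ω θ n x = fibIter F ω (Int.fract θ) n (Int.fract x) + (⌊x⌋ : ℤ) := by
    conv_lhs => rw [hθ, hx]
    rw [fib_theta_add_int hFθ, fib_add_int hFx]
  rw [h1]
  have : x - (⌊x⌋ : ℤ) = Int.fract x := by rw [Int.fract]
  linarith [this]

lemma disp_bound (hFc : Continuous fun p : ℝ × ℝ => F p.1 p.2)
    (hFθ : ∀ θ x : ℝ, F (θ + 1) x = F θ x)
    (hFx : ∀ θ x : ℝ, F θ (x + 1) = F θ x + 1) (n : ℕ) :
    ∃ M : ℝ, ∀ θ x : ℝ, |fibIter F ω θ n x - x| ≤ M := by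
  set Ω : Set (ℝ × ℝ) := Icc (0:ℝ) 1 ×ˢ Icc (0:ℝ) 1 with hΩ
  have hΩc : IsCompact Ω := isCompact_Icc.prod isCompact_Icc
  have hcont : Continuous fun p : ℝ × ℝ => |fibIter F ω p.1 n p.2 - p.2| :=
    ((fib_cont hFc n).sub continuous_snd).abs
  obtain ⟨p0, _, hp0⟩ := hΩc.exists_isMaxOn ⟨(0,0), by constructor <;> constructor <;> norm_num⟩
    hcont.continuousOn
  refine ⟨|fibIter F ω p0.1 n p0.2 - p0.2|, fun θ x => ?_⟩
  have hmem : (Int.fract θ, Int.fract x) ∈ Ω := by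
    constructor <;> exact ⟨Int.fract_nonneg _, (Int.fract_lt_one _).le⟩
  have h := hp0 hmem
  simp only [Set.mem_setOf_eq] at h
  rw [← disp_fract (ω := ω) hFθ hFx n θ x]
  exact h

lemma disp_bound_upto (hFc : Continuous fun p : ℝ × ℝ => F p.1 p.2)
    (hFθ : ∀ θ x : ℝ, F (θ + 1) x = F θ x)
    (hFx : ∀ θ x : ℝ, F θ (x + 1) = F θ x + 1) (G : ℕ) :
    ∃ M : ℝ, 0 ≤ M ∧ ∀ r ≤ G, ∀ θ x : ℝ, |fibIter F ω θ r x - x| ≤ M := by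
  induction G with
  | zero =>
      obtain ⟨M, hM⟩ := disp_bound (ω := ω) hFc hFθ hFx 0
      exact ⟨max M 0, le_max_right _ _, fun r hr θ x => by
        interval_cases r; exact (hM θ x).trans (le_max_left _ _)⟩
  | succ G ih =>
      obtain ⟨M, hM0, hM⟩ := ih
      obtain ⟨M', hM'⟩ := disp_bound (ω := ω) hFc hFθ hFx (G+1)
      refine ⟨max M M', le_trans hM0 (le_max_left _ _), fun r hr θ x => ?_⟩
      rcases Nat.lt_or_ge r (G+1) with h | h
      · exact (hM r (Nat.lt_succ_iff.mp h) θ x).trans (le_max_left _ _)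
      · have : r = G + 1 := le_antisymm hr h
        subst this
        exact (hM' θ x).trans (le_max_right _ _)

lemma dev_cocycle (ρ θ x : ℝ) (n m : ℕ) :
    fibIter F ω θ (n + m) x - x - (↑(n + m)) * ρ =
      (fibIter F ω θ n x - x - n * ρ) +
      (fibIter F ω (θ + n * ω) m (fibIter F ω θ n x) - fibIter F ω θ n x - m * ρ) := by
  rw [fib_add]; push_cast; ring


lemma exists_dev_le_one (hFc : Continuous fun p : ℝ × ℝ => F p.1 p.2)
    (hFθ : ∀ θ x : ℝ, F (θ + 1) x = F θ x)
    (hFx : ∀ θ x : ℝ, F θ (x + 1) = F θ x + 1) {ρ : ℝ}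
    (hρ : ∀ θ x : ℝ, Tendsto (fun n : ℕ => (fibIter F ω θ n x - x) / n) atTop (nhds ρ)) :
    ∃ θ x : ℝ, ∀ n : ℕ, fibIter F ω θ n x - x - n * ρ ≤ 1 := by
  by_contra hcon
  push_neg at hcon
  set Ω : Set (ℝ × ℝ) := Icc (0:ℝ) 1 ×ˢ Icc (0:ℝ) 1 with hΩ
  have hΩc : IsCompact Ω := isCompact_Icc.prod isCompact_Icc
  have hcover : Ω ⊆ ⋃ n : ℕ, {p : ℝ × ℝ | 1 < fibIter F ω p.1 n p.2 - p.2 - n * ρ} := by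
    intro p _
    obtain ⟨n, hn⟩ := hcon p.1 p.2
    exact mem_iUnion.mpr ⟨n, hn⟩
  obtain ⟨t, ht⟩ := hΩc.elim_finite_subcover _
    (fun n => isOpen_lt continuous_const
      (((fib_cont hFc n).sub continuous_snd).sub continuous_const)) hcover
  set N := t.sup id with hN
  have key : ∀ θ x : ℝ, ∃ n : ℕ, 1 ≤ n ∧ n ≤ N ∧ 1 < fibIter F ω θ n x - x - n * ρ := by
    intro θ x
    have hmem : (Int.fract θ, Int.fract x) ∈ Ω := by
      constructor <;> exact ⟨Int.fract_nonneg _, (Int.fract_lt_one _).le⟩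
    have h := ht hmem
    simp only [mem_iUnion, Set.mem_setOf_eq] at h
    obtain ⟨n, hnt, hn⟩ := h
    change 1 < fibIter F ω (Int.fract θ) n (Int.fract x) - Int.fract x - n * ρ at hn
    rw [disp_fract (ω := ω) hFθ hFx n θ x] at hn
    refine ⟨n, ?_, Finset.le_sup (f := id) hnt, hn⟩
    rcases Nat.eq_zero_or_pos n with h0 | h1
    · subst h0; simp [fibIter] at hn; linarith
    · exact h1
  choose nf hnf1 hnf2 hnf3 using key
  -- recursively defined times
  let m : ℕ → ℕ := fun k =>
    Nat.rec (motive := fun _ => ℕ) 0 (fun _ mk => mk + nf ((0:ℝ) + (mk : ℝ) * ω) (fibIter F ω 0 mk 0)) k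
  have hms : ∀ k, m (k+1) = m k + nf ((0:ℝ) + (Nat.cast (m k) : ℝ) * ω) (fibIter F ω 0 (m k) 0) := by
    intro k; rfl
  have hDgrow : ∀ k : ℕ, (k : ℝ) ≤ fibIter F ω 0 (m k) 0 - 0 - (↑(m k) : ℝ) * ρ := by
    intro k
    induction k with
    | zero => simp [m, fibIter]
    | succ k ih =>
        rw [hms k, dev_cocycle]
        have := hnf3 ((0:ℝ) + (m k) * ω) (fibIter F ω 0 (m k) 0)
        push_cast
        push_cast at ih
        linarith
  have hmub : ∀ k, m k ≤ k * N := by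
    intro k
    induction k with
    | zero => simp [m]
    | succ k ih =>
        rw [hms k]
        have := hnf2 ((0:ℝ) + (m k) * ω) (fibIter F ω 0 (m k) 0)
        calc m k + _ ≤ k * N + N := Nat.add_le_add ih this
        _ = (k+1) * N := by ring
  have hmlb : ∀ k, k ≤ m k := by
    intro k
    induction k with
    | zero => simp [m]
    | succ k ih =>
        rw [hms k]
        have := hnf1 ((0:ℝ) + (m k) * ω) (fibIter F ω 0 (m k) 0)
        omega
  have hN1 : 1 ≤ N := le_trans (hnf1 0 0) (hnf2 0 0)
  have hT0 : Tendsto (fun n : ℕ => (fibIter F ω 0 n 0 - 0 - n * ρ) / n) atTop (nhds 0) := by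
    have h1 := (hρ 0 0).sub_const ρ
    rw [sub_self] at h1
    apply h1.congr'
    filter_upwards [eventually_ge_atTop 1] with n hn
    have hn0 : (n : ℝ) ≠ 0 := Nat.cast_ne_zero.mpr (by omega)
    field_simp
  have hmt : Tendsto m atTop atTop := tendsto_atTop_mono hmlb tendsto_id
  have hcomp : Tendsto (fun k => (fibIter F ω 0 (m k) 0 - 0 - (↑(m k) : ℝ) * ρ) / (↑(m k) : ℝ))
      atTop (nhds 0) := hT0.comp hmt
  have hlow : ∀ᶠ k in atTop,
      (1 : ℝ) / N ≤ (fibIter F ω 0 (m k) 0 - 0 - (↑(m k) : ℝ) * ρ) / (↑(m k) : ℝ) := by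
    filter_upwards [eventually_ge_atTop 1] with k hk
    have hmk1 : 1 ≤ m k := le_trans hk (hmlb k)
    have hmpos : (0:ℝ) < m k := by exact_mod_cast hmk1
    have hNpos : (0:ℝ) < N := by exact_mod_cast hN1
    rw [div_le_div_iff₀ hNpos hmpos]
    have hD := hDgrow k
    have hub : (m k : ℝ) ≤ (k : ℝ) * N := by exact_mod_cast hmub k
    have hkD : (k : ℝ) ≤ fibIter F ω 0 (m k) 0 - 0 - (↑(m k) : ℝ) * ρ := hD
    have hN0 : (0:ℝ) ≤ N := hNpos.le
    nlinarith
  have hfin : (1:ℝ) / N ≤ 0 := ge_of_tendsto hcomp hlow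
  have hNpos : (0:ℝ) < N := by exact_mod_cast hN1
  have : (0:ℝ) < 1 / N := by positivity
  linarith


lemma step_cover_pos {η δ : ℝ} (hη : 0 < η) (hδ : η ≤ δ) (t a : ℝ) :
    ∃ j : ℕ, j ≤ ⌈1/η⌉₊ + 1 ∧ ∃ ℓ : ℤ, |t + j * η - a - ℓ| ≤ δ := by
  set u : ℝ := a + ⌈t - a⌉ with hu
  have hu1 : t ≤ u := by
    have := Int.le_ceil (t - a); simp only [hu]; linarith
  have hu2 : u ≤ t + 1 := by
    have := Int.ceil_lt_add_one (t - a); simp only [hu]; linarith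
  set j : ℕ := ⌈(u - t)/η⌉₊ with hj
  have hrat : 0 ≤ (u - t)/η := div_nonneg (by linarith) hη.le
  have hj1 : (u - t)/η ≤ (j : ℝ) := Nat.le_ceil _
  have hj2 : (j : ℝ) < (u - t)/η + 1 := Nat.ceil_lt_add_one hrat
  have hlow : u ≤ t + j * η := by
    have := (div_le_iff₀ hη).mp hj1; linarith
  have hhigh : t + j * η ≤ u + η := by
    have : (j : ℝ) * η < ((u - t)/η + 1) * η := by
      exact mul_lt_mul_of_pos_right hj2 hη
    have hid : ((u - t)/η) * η = u - t := div_mul_cancel₀ _ hη.ne'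
    nlinarith
  refine ⟨j, ?_, ⌈t - a⌉, ?_⟩
  · have hb : (u - t)/η ≤ 1/η := by
      exact div_le_div_of_nonneg_right (by linarith) hη.le
    have : j ≤ ⌈1/η⌉₊ := Nat.ceil_le_ceil hb
    omega
  · have : t + (j : ℝ) * η - a - (⌈t - a⌉ : ℤ) = t + j * η - u := by
      simp only [hu]; ring
    rw [this, abs_le]
    constructor <;> linarith


lemma step_cover {η δ : ℝ} (hη : η ≠ 0) (hδ : |η| ≤ δ) (t a : ℝ) :
    ∃ j : ℕ, j ≤ ⌈1/|η|⌉₊ + 1 ∧ ∃ ℓ : ℤ, |t + j * η - a - ℓ| ≤ δ := by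
  rcases lt_or_gt_of_ne hη with hneg | hpos
  · obtain ⟨j, hj, ℓ', hℓ'⟩ := step_cover_pos (η := -η) (δ := δ)
      (by linarith) (by rwa [abs_of_neg hneg] at hδ) (-t) (-a)
    refine ⟨j, by rwa [abs_of_neg hneg], -ℓ', ?_⟩
    have heq : t + (j:ℝ) * η - a - (↑(-ℓ') : ℝ) = -(-t + j * -η - -a - ℓ') := by
      push_cast; ring
    rw [heq, abs_neg]
    exact hℓ'
  · obtain ⟨j, hj, ℓ, hℓ⟩ := step_cover_pos (δ := δ) hpos (by rwa [abs_of_pos hpos] at hδ) t a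
    exact ⟨j, by rwa [abs_of_pos hpos], ℓ, hℓ⟩

lemma rot_approx {ω : ℝ} (hirr : Irrational ω) {δ : ℝ} (hδ : 0 < δ) :
    ∃ G : ℕ, ∀ t a : ℝ, ∃ r : ℕ, r ≤ G ∧ ∃ ℓ : ℤ, |t + r * ω - a - ℓ| ≤ δ := by
  set n : ℕ := max 1 ⌈1/δ⌉₊ with hn
  have n_pos : 0 < n := lt_of_lt_of_le one_pos (le_max_left _ _)
  obtain ⟨j0, k, hk0, hkn, happ⟩ := Real.exists_int_int_abs_mul_sub_le ω n_pos
  set η : ℝ := k * ω - j0 with hηdef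
  have hη0 : η ≠ 0 := by
    intro h
    have : (k : ℝ) * ω = j0 := by linarith [sub_eq_zero.mp h]
    exact (hirr.intCast_mul hk0.ne').ne_int j0 this
  have hηδ : |η| ≤ δ := by
    have h1 : (1:ℝ)/δ ≤ ⌈1/δ⌉₊ := Nat.le_ceil _
    have h2 : (⌈1/δ⌉₊ : ℝ) ≤ n := by exact_mod_cast le_max_right 1 ⌈1/δ⌉₊
    have h3 : (1:ℝ)/δ < n + 1 := by linarith
    have h4 : (1:ℝ)/(n+1) ≤ δ := by
      rw [div_le_iff₀ (by positivity)]
      rw [div_lt_iff₀ hδ] at h3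
      linarith
    exact happ.trans h4
  refine ⟨k.toNat * (⌈1/|η|⌉₊ + 1), fun t a => ?_⟩
  obtain ⟨j, hjb, ℓ', hℓ'⟩ := step_cover hη0 hηδ t a
  refine ⟨j * k.toNat, ?_, ℓ' + j * j0, ?_⟩
  · calc j * k.toNat ≤ (⌈1/|η|⌉₊ + 1) * k.toNat := Nat.mul_le_mul_right _ hjb
    _ = k.toNat * (⌈1/|η|⌉₊ + 1) := Nat.mul_comm _ _
  · have hkt : ((k.toNat : ℕ) : ℝ) = (k : ℝ) := by
      exact_mod_cast congrArg (Int.cast : ℤ → ℝ) (Int.toNat_of_nonneg hk0.le)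
    have : t + (↑(j * k.toNat) : ℝ) * ω - a - (↑(ℓ' + j * j0) : ℝ)
        = t + j * η - a - ℓ' := by
      push_cast [hkt]
      simp only [hηdef]
      ring
    rw [this]
    exact hℓ'


lemma fib_neg (θ x : ℝ) (n : ℕ) :
    fibIter (fun β y => -F β (-y)) ω θ n x = -(fibIter F ω θ n (-x)) := by
  induction n with
  | zero => simp [fibIter]
  | succ n ih =>
      show (fun β y => -F β (-y)) (θ + n * ω) (fibIter (fun β y => -F β (-y)) ω θ n x) = _
      rw [ih]
      simp [fibIter]

lemma exists_dev_ge_neg_one (hFc : Continuous fun p : ℝ × ℝ => F p.1 p.2)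
    (hFθ : ∀ θ x : ℝ, F (θ + 1) x = F θ x)
    (hFx : ∀ θ x : ℝ, F θ (x + 1) = F θ x + 1) {ρ : ℝ}
    (hρ : ∀ θ x : ℝ, Tendsto (fun n : ℕ => (fibIter F ω θ n x - x) / n) atTop (nhds ρ)) :
    ∃ θ x : ℝ, ∀ n : ℕ, -1 ≤ fibIter F ω θ n x - x - n * ρ := by
  have hsub : ∀ θ y : ℝ, F θ (y - 1) = F θ y - 1 := by
    intro θ y
    have := hFx θ (y - 1)
    simp at this
    linarith
  obtain ⟨θ, x, hbd⟩ := exists_dev_le_one (F := fun β y => -F β (-y)) (ω := ω)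
    (by exact (hFc.comp (continuous_fst.prodMk continuous_snd.neg)).neg)
    (fun β y => by simp [hFθ])
    (fun β y => by
      show -F β (-(y+1)) = -F β (-y) + 1
      have : -(y+1) = (-y) - 1 := by ring
      rw [this, hsub]; ring)
    (ρ := -ρ)
    (fun β y => by
      have h := (hρ β (-y)).neg
      apply h.congr
      intro n
      rw [fib_neg]
      ring)
  refine ⟨θ, -x, fun n => ?_⟩
  have := hbd n
  rw [fib_neg] at this
  linarith


lemma coe_add_int_circle (x : ℝ) (k : ℤ) :
    ((x + k : ℝ) : AddCircle (1:ℝ)) = (x : AddCircle (1:ℝ)) := by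
  rw [QuotientAddGroup.eq_iff_sub_mem]
  simpa using AddSubgroup.intCast_mem_zmultiples_one (k := k)

lemma coe_circle_surj (u : AddCircle (1:ℝ)) : ∃ x : ℝ, (x : AddCircle (1:ℝ)) = u :=
  QuotientAddGroup.mk_surjective u


end IrrAux

open IrrAux

/-- an irregular quasiperiodically forced circle homeomorphism is
topologically transitive. -/
theorem irregular_implies_transitive
    (F : ℝ → ℝ → ℝ) (ω : ℝ) (hirr : Irrational ω)
    (hFc : Continuous fun p : ℝ × ℝ => F p.1 p.2)
    (hFm : ∀ θ : ℝ, StrictMono (F θ))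
    (hFs : ∀ θ : ℝ, Function.Surjective (F θ))
    (hFx : ∀ θ x : ℝ, F θ (x + 1) = F θ x + 1)
    (hFθ : ∀ θ x : ℝ, F (θ + 1) x = F θ x)
    (T : AddCircle (1:ℝ) × AddCircle (1:ℝ) → AddCircle (1:ℝ) × AddCircle (1:ℝ))
    (hproj : ∀ θ x : ℝ,
      T ((θ : AddCircle (1:ℝ)), (x : AddCircle (1:ℝ))) =
        (((θ + ω : ℝ) : AddCircle (1:ℝ)), ((F θ x : ℝ) : AddCircle (1:ℝ))))
    (ρ : ℝ)
    (hρ : ∀ θ x : ℝ, Tendsto (fun n : ℕ => (fibIter F ω θ n x - x) / n) atTop (nhds ρ))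
    (hirrT : ∀ θ x : ℝ, ¬∃ C : ℝ, ∀ n : ℕ, |fibIter F ω θ n x - x - n * ρ| ≤ C) :
    ∀ U V : Set (AddCircle (1:ℝ) × AddCircle (1:ℝ)),
      IsOpen U → IsOpen V → U.Nonempty → V.Nonempty →
      ∃ n : ℕ, (T^[n] '' U ∩ V).Nonempty := by
  intro U V hU hV hUne hVne
  -- the projection map
  set π₂ : ℝ × ℝ → AddCircle (1:ℝ) × AddCircle (1:ℝ) :=
    fun p => ((p.1 : AddCircle (1:ℝ)), (p.2 : AddCircle (1:ℝ))) with hπ₂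
  have hπc : Continuous π₂ := by
    apply Continuous.prodMk
    · exact (AddCircle.continuous_mk' 1).comp continuous_fst
    · exact (AddCircle.continuous_mk' 1).comp continuous_snd
  -- iterate formula
  have hiter : ∀ (n : ℕ) (θ x : ℝ),
      T^[n] (π₂ (θ, x)) = π₂ (θ + n * ω, fibIter F ω θ n x) := by
    intro n
    induction n with
    | zero => intro θ x; simp [fibIter]
    | succ n ih =>
        intro θ x
        rw [Function.iterate_succ_apply', ih θ x]
        show T ((_ : AddCircle (1:ℝ)), (_ : AddCircle (1:ℝ))) = _
        rw [hproj (θ + n * ω) (fibIter F ω θ n x)]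
        have h1 : θ + (n:ℝ) * ω + ω = θ + ((n:ℕ)+1 : ℕ) * ω := by push_cast; ring
        have h2 : F (θ + (n:ℝ) * ω) (fibIter F ω θ n x) = fibIter F ω θ (n+1) x := rfl
        rw [h1, h2]
  -- base points and radii for U and V
  obtain ⟨u, hu⟩ := hUne
  obtain ⟨θ0, hθ0⟩ := coe_circle_surj u.1
  obtain ⟨x0, hx0⟩ := coe_circle_surj u.2
  have huU : (θ0, x0) ∈ π₂ ⁻¹' U := by
    simp only [Set.mem_preimage, hπ₂]
    rw [show ((θ0 : AddCircle (1:ℝ)), (x0 : AddCircle (1:ℝ))) = u from Prod.ext hθ0 hx0]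
    exact hu
  obtain ⟨ε, hε, hball⟩ := Metric.isOpen_iff.mp (hU.preimage hπc) _ huU
  obtain ⟨v, hv⟩ := hVne
  obtain ⟨θ1, hθ1⟩ := coe_circle_surj v.1
  obtain ⟨x1, hx1⟩ := coe_circle_surj v.2
  have hvV : (θ1, x1) ∈ π₂ ⁻¹' V := by
    simp only [Set.mem_preimage, hπ₂]
    rw [show ((θ1 : AddCircle (1:ℝ)), (x1 : AddCircle (1:ℝ))) = v from Prod.ext hθ1 hx1]
    exact hv
  obtain ⟨ε1, hε1, hball1⟩ := Metric.isOpen_iff.mp (hV.preimage hπc) _ hvV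
  -- small scale
  set δ0 : ℝ := min ε ε1 / 4 with hδ0def
  have hδ0 : 0 < δ0 := by positivity
  have hδ0ε : δ0 < ε := by
    have : min ε ε1 ≤ ε := min_le_left _ _
    simp only [hδ0def]; linarith
  have hδ0ε1 : 2 * δ0 < ε1 := by
    have : min ε ε1 ≤ ε1 := min_le_right _ _
    simp only [hδ0def]; linarith
  obtain ⟨G, hG⟩ := rot_approx hirr hδ0
  obtain ⟨M, hM0, hM⟩ := disp_bound_upto (ω := ω) hFc hFθ hFx G
  -- the two special orbits
  obtain ⟨θa, xa, hA⟩ := exists_dev_le_one (ω := ω) hFc hFθ hFx hρ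
  obtain ⟨θb, xb, hB⟩ := exists_dev_ge_neg_one (ω := ω) hFc hFθ hFx hρ
  -- transport the + orbit near θ0
  obtain ⟨ra, _, ℓa, hℓa⟩ := hG θa θ0
  set βp : ℝ := θa + ra * ω - ℓa with hβpdef
  set yp : ℝ := fibIter F ω θa ra xa with hypdef
  set Da : ℝ := fibIter F ω θa ra xa - xa - ra * ρ with hDadef
  set Cp : ℝ := 1 + |Da| with hCpdef
  have hβp : |βp - θ0| ≤ δ0 := by
    have : βp - θ0 = θa + ra * ω - θ0 - ℓa := by rw [hβpdef]; ring
    rw [this]; exact hℓa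
  have hfibβp : ∀ (n : ℕ) (z : ℝ), fibIter F ω βp n z = fibIter F ω (θa + ra * ω) n z := by
    intro n z
    have : βp = (θa + ra * ω) + ((-ℓa : ℤ) : ℝ) := by push_cast [hβpdef]; ring
    rw [this, fib_theta_add_int hFθ]
  have hdevp : ∀ n : ℕ, fibIter F ω βp n yp - yp - n * ρ ≤ Cp := by
    intro n
    have h2 : fibIter F ω (θa + ra * ω) n yp = fibIter F ω θa (ra + n) xa :=
      (fib_add θa xa ra n).symm
    have hkey := hA (ra + n)
    have hcast : ((ra + n : ℕ) : ℝ) = (ra : ℝ) + n := by push_cast; ring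
    rw [hcast] at hkey
    have habs : -Da ≤ |Da| := neg_le_abs _
    rw [hfibβp n yp, h2]
    simp only [hypdef, hDadef, hCpdef] at *
    linarith
  -- transport the - orbit near θ0
  obtain ⟨rb, _, ℓb, hℓb⟩ := hG θb θ0
  set βm : ℝ := θb + rb * ω - ℓb with hβmdef
  set ym : ℝ := fibIter F ω θb rb xb with hymdef
  set Db : ℝ := fibIter F ω θb rb xb - xb - rb * ρ with hDbdef
  set Cm : ℝ := 1 + |Db| with hCmdef
  have hβm : |βm - θ0| ≤ δ0 := by
    have : βm - θ0 = θb + rb * ω - θ0 - ℓb := by rw [hβmdef]; ring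
    rw [this]; exact hℓb
  have hfibβm : ∀ (n : ℕ) (z : ℝ), fibIter F ω βm n z = fibIter F ω (θb + rb * ω) n z := by
    intro n z
    have : βm = (θb + rb * ω) + ((-ℓb : ℤ) : ℝ) := by push_cast [hβmdef]; ring
    rw [this, fib_theta_add_int hFθ]
  have hdevm : ∀ n : ℕ, -Cm ≤ fibIter F ω βm n ym - ym - n * ρ := by
    intro n
    have h2 : fibIter F ω (θb + rb * ω) n ym = fibIter F ω θb (rb + n) xb :=
      (fib_add θb xb rb n).symm
    have hkey := hB (rb + n)
    have hcast : ((rb + n : ℕ) : ℝ) = (rb : ℝ) + n := by push_cast; ring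
    rw [hcast] at hkey
    have habs : Db ≤ |Db| := le_abs_self _
    rw [hfibβm n ym, h2]
    simp only [hymdef, hDbdef, hCmdef] at *
    linarith
  -- the dip time
  set K : ℝ := Cm + 2 * M + 7 with hKdef
  have hdip : ∃ m : ℕ, fibIter F ω βp m yp - yp - m * ρ < -K := by
    by_contra hcon
    push_neg at hcon
    refine hirrT βp yp ⟨max Cp K, fun n => ?_⟩
    rw [abs_le]
    constructor
    · have := hcon n
      have : -(max Cp K) ≤ -K := by
        simp only [neg_le_neg_iff]; exact le_max_right _ _
      linarith [hcon n]
    · exact (hdevp n).trans (le_max_left _ _)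
  obtain ⟨m, hdipm⟩ := hdip
  -- the good return time
  obtain ⟨r, hrG, ℓ, hℓ⟩ := hG (θ0 + m * ω) θ1
  set s : ℕ := m + r with hsdef
  -- endpoint estimates at time m
  have e1 : fibIter F ω βp m x0 - x0 - m * ρ < -K + 1 := by
    have := disp_le (ω := ω) hFm hFx βp m yp x0
    linarith
  have e2 : -Cm - 1 ≤ fibIter F ω βm m x0 - x0 - m * ρ := by
    have := disp_le (ω := ω) hFm hFx βm m x0 ym
    linarith [hdevm m]
  set R : ℝ := fibIter F ω βm m x0 - fibIter F ω βp m x0 with hRdef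
  have hR : 2 * M + 5 ≤ R := by
    simp only [hRdef, hKdef] at *
    linarith
  set p : ℤ := ⌊R⌋ with hpdef
  have hp1 : (p : ℝ) ≤ R := Int.floor_le _
  have hp2 : R - 1 < p := Int.sub_one_lt_floor _
  have hp2M : 2 * M + 4 ≤ (p : ℝ) := by linarith
  -- persistence of the gap to time s
  have hgap : fibIter F ω βp s x0 + 2 ≤ fibIter F ω βm s x0 := by
    have hsplit_m : fibIter F ω βm s x0
        = fibIter F ω (βm + m * ω) r (fibIter F ω βm m x0) := fib_add βm x0 m r
    have hsplit_p : fibIter F ω βp s x0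
        = fibIter F ω (βp + m * ω) r (fibIter F ω βp m x0) := fib_add βp x0 m r
    have hmono := (fib_mono (ω := ω) hFm (βm + m * ω) r).monotone
      (show fibIter F ω βp m x0 + (p:ℝ) ≤ fibIter F ω βm m x0 by linarith)
    rw [fib_add_int hFx] at hmono
    have hd1 := hM r hrG (βm + m * ω) (fibIter F ω βp m x0)
    have hd2 := hM r hrG (βp + m * ω) (fibIter F ω βp m x0)
    rw [abs_le] at hd1 hd2
    rw [hsplit_m, hsplit_p]
    have := hd1.1
    have := hd2.2
    linarith
  -- intermediate value
  set g : ℝ → ℝ := fun θ => fibIter F ω θ s x0 with hgdef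
  have hgc : Continuous g := by
    have := fib_cont (ω := ω) hFc s
    exact this.comp (continuous_id.prodMk continuous_const)
  set w : ℝ := x1 + (⌈g βp - x1⌉ : ℤ) with hwdef
  have hw1 : g βp ≤ w := by
    have := Int.le_ceil (g βp - x1)
    simp only [hwdef]; linarith
  have hw2 : w ≤ g βm := by
    have := Int.ceil_lt_add_one (g βp - x1)
    have hgap' : g βp + 2 ≤ g βm := hgap
    simp only [hwdef]; linarith
  have hwmem : w ∈ uIcc (g βp) (g βm) := Set.mem_uIcc.mpr (Or.inl ⟨hw1, hw2⟩)
  obtain ⟨θs, hθsmem, hθsval⟩ := intermediate_value_uIcc (hgc.continuousOn) hwmem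
  have hθs : |θs - θ0| ≤ δ0 := by
    rw [abs_le] at hβp hβm ⊢
    rcases Set.mem_uIcc.mp hθsmem with ⟨h1, h2⟩ | ⟨h1, h2⟩ <;>
      exact ⟨by linarith [hβp.1, hβm.1], by linarith [hβp.2, hβm.2]⟩
  -- conclusion
  refine ⟨s, T^[s] (π₂ (θs, x0)), Set.mem_image_of_mem _ ?_, ?_⟩
  · apply hball
    rw [Metric.mem_ball, Prod.dist_eq]
    simp only [Real.dist_eq]
    apply max_lt
    · calc |θs - θ0| ≤ δ0 := hθs
      _ < ε := hδ0ε
    · simpa using hε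
  · rw [hiter s θs x0]
    have hval : fibIter F ω θs s x0 = x1 + (⌈g βp - x1⌉ : ℤ) := hθsval
    have hcoord2 : ((fibIter F ω θs s x0 : ℝ) : AddCircle (1:ℝ)) = (x1 : AddCircle (1:ℝ)) := by
      rw [hval]; exact coe_add_int_circle x1 _
    have hcoord1 : ((θs + s * ω : ℝ) : AddCircle (1:ℝ))
        = ((θs + s * ω - ℓ : ℝ) : AddCircle (1:ℝ)) := by
      have h := coe_add_int_circle (θs + s * ω - ℓ) ℓ
      rw [show ((θs + (s:ℝ) * ω - ℓ) + ((ℓ:ℤ):ℝ) : ℝ) = θs + s * ω from by push_cast; ring] at h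
      exact h
    have hmem : (θs + s * ω - ℓ, x1) ∈ π₂ ⁻¹' V := by
      apply hball1
      rw [Metric.mem_ball, Prod.dist_eq]
      simp only [Real.dist_eq]
      apply max_lt
      · have hb : |θ0 + m * ω + r * ω - θ1 - ℓ| ≤ δ0 := hℓ
        have : θs + (s:ℝ) * ω - ℓ - θ1
            = (θ0 + m * ω + r * ω - θ1 - ℓ) + (θs - θ0) := by
          simp only [hsdef]; push_cast; ring
        rw [this]
        calc |(θ0 + m * ω + r * ω - θ1 - ℓ) + (θs - θ0)|
            ≤ |θ0 + m * ω + r * ω - θ1 - ℓ| + |θs - θ0| := abs_add_le _ _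
        _ ≤ δ0 + δ0 := add_le_add hb hθs
        _ < ε1 := by linarith
      · simpa using hε1
    have : π₂ (θs + s * ω, fibIter F ω θs s x0) = π₂ (θs + s * ω - ℓ, x1) := by
      simp only [hπ₂]
      exact Prod.ext hcoord1 hcoord2
    rw [this]
    exact hmem

end
end
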